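/- arXiv:2510.05669 — 2 statements merged into one kernel-verified Lean document; each statement's English description precedes it below -/
import Mathlib

section
/- Let α = [o, ξ) be a geodesic ray in a proper CAT(0) space X ending at a boundary point ξ ∈ ∂_∞X. Suppose there is C > 0 and a sequence of C-contracting geodesic segments p_n such that N_C(p_n) ∩ α leaves every compact set and has diameter at least 8C for every n. Then for every boundary point η ∈ ∂_∞X with η ≠ ξ there exists a bi-infinite geodesic in X with endpoints ξ and η. -/
open scoped NNReal

/-- A map `γ : ℝ → X` is a (unit-speed) geodesic on the interval `[a, b]`. -/
def IsGeodesicOn {X : Type*} [MetricSpace X] (γ : ℝ → X) (a b : ℝ) : Prop :=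
  ∀ s ∈ Set.Icc a b, ∀ t ∈ Set.Icc a b, dist (γ s) (γ t) = |s - t|

/-- `X` is a CAT(0) space: geodesic and satisfying the CN comparison inequality. -/
def IsCAT0 (X : Type*) [MetricSpace X] : Prop :=
  (∀ x y : X, ∃ γ : ℝ → X, IsGeodesicOn γ 0 (dist x y) ∧ γ 0 = x ∧ γ (dist x y) = y) ∧
  (∀ (γ : ℝ → X) (a b : ℝ), a ≤ b → IsGeodesicOn γ a b → ∀ x : X, ∀ t ∈ Set.Icc (0 : ℝ) 1,
    dist x (γ (a + t * (b - a))) ^ 2 ≤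
      (1 - t) * dist x (γ a) ^ 2 + t * dist x (γ b) ^ 2 - t * (1 - t) * dist (γ a) (γ b) ^ 2)

/-- The set of nearest-point projections of `x` to `U`. -/
noncomputable def ProjSet {X : Type*} [MetricSpace X] (U : Set X) (x : X) : Set X :=
  {y ∈ U | dist x y = Metric.infDist x U}

/-- `U` is `C`-contracting: every geodesic at distance `≥ C` from `U`
projects to a subset of `U` of diameter `≤ C`. -/
def IsContractingSet {X : Type*} [MetricSpace X] (U : Set X) (C : ℝ) : Prop :=
  ∀ (γ : ℝ → X) (a b : ℝ), a ≤ b → IsGeodesicOn γ a b →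
    (∀ t ∈ Set.Icc a b, C ≤ Metric.infDist (γ t) U) →
    Metric.diam (⋃ t ∈ Set.Icc a b, ProjSet U (γ t)) ≤ C

open Metric Filter Set Topology

section AuxLemmas

variable {X : Type*} [MetricSpace X]

lemma geo_restrict {γ : ℝ → X} {a b c d : ℝ} (h : IsGeodesicOn γ a b) (hc : a ≤ c)
    (hd : d ≤ b) : IsGeodesicOn γ c d := by
  intro s hs t ht
  exact h s ⟨hc.trans hs.1, hs.2.trans hd⟩ t ⟨hc.trans ht.1, ht.2.trans hd⟩

lemma geo_shift {γ : ℝ → X} {a b : ℝ} (h : IsGeodesicOn γ a b) :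
    IsGeodesicOn (fun v => γ (a + v)) 0 (b - a) := by
  intro s hs t ht
  have := h (a + s) ⟨by linarith [hs.1], by linarith [hs.2]⟩
      (a + t) ⟨by linarith [ht.1], by linarith [ht.2]⟩
  simpa [add_sub_add_left_eq_sub] using this

lemma geo_rev {γ : ℝ → X} {L : ℝ} (h : IsGeodesicOn γ 0 L) :
    IsGeodesicOn (fun v => γ (L - v)) 0 L := by
  intro s hs t ht
  have := h (L - s) ⟨by linarith [hs.2], by linarith [hs.1]⟩
      (L - t) ⟨by linarith [ht.2], by linarith [ht.1]⟩
  simp only [this]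
  rw [abs_sub_comm]
  ring_nf

lemma geo_continuousOn {γ : ℝ → X} {a b : ℝ} (h : IsGeodesicOn γ a b) :
    ContinuousOn γ (Set.Icc a b) := by
  have : LipschitzOnWith 1 γ (Set.Icc a b) := by
    rw [lipschitzOnWith_iff_dist_le_mul]
    intro s hs t ht
    rw [h s hs t ht, Real.dist_eq]
    simp
  exact this.continuousOn

lemma projset_nonempty {P : Set X} (hP : IsCompact P) (hne : P.Nonempty) (x : X) :
    (ProjSet P x).Nonempty := by
  obtain ⟨y, hy, hd⟩ := hP.exists_infDist_eq_dist hne x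
  exact ⟨y, hy, hd.symm⟩

lemma projset_mem {P : Set X} {x y : X} (h : y ∈ ProjSet P x) :
    y ∈ P ∧ dist x y = infDist x P := h

lemma contr_pair {P : Set X} {C : ℝ} (hc : IsContractingSet P C)
    (hPb : Bornology.IsBounded P) {σ : ℝ → X} {a b : ℝ} (hab : a ≤ b)
    (hg : IsGeodesicOn σ a b) (hfar : ∀ t ∈ Set.Icc a b, C ≤ infDist (σ t) P)
    {p q : X} (hp : p ∈ ProjSet P (σ a)) (hq : q ∈ ProjSet P (σ b)) : dist p q ≤ C := by
  set S := ⋃ t ∈ Set.Icc a b, ProjSet P (σ t) with hS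
  have hSP : S ⊆ P := by
    intro y hy
    simp only [hS, Set.mem_iUnion] at hy
    obtain ⟨t, _, hyt⟩ := hy
    exact hyt.1
  have hpS : p ∈ S := by
    simp only [hS, Set.mem_iUnion]
    exact ⟨a, ⟨le_refl a, hab⟩, hp⟩
  have hqS : q ∈ S := by
    simp only [hS, Set.mem_iUnion]
    exact ⟨b, ⟨hab, le_refl b⟩, hq⟩
  calc dist p q ≤ Metric.diam S := Metric.dist_le_diam_of_mem (hPb.subset hSP) hpS hqS
  _ ≤ C := hc σ a b hab hg hfar

/-- First-entry lemma: a geodesic whose endpoint projections are more than `C` apart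
passes within `2C` of the projection of its start point. -/
lemma first_entry {P : Set X} {C : ℝ} (hC : 0 < C) (hc : IsContractingSet P C)
    (hPc : IsCompact P) (hPne : P.Nonempty) {σ : ℝ → X} {L : ℝ} (hL : 0 ≤ L)
    (hg : IsGeodesicOn σ 0 L) {p q : X} (hp : p ∈ ProjSet P (σ 0))
    (hq : q ∈ ProjSet P (σ L)) (hfar : C < dist p q) :
    ∃ s ∈ Set.Icc 0 L, dist (σ s) p ≤ 2 * C := by
  have hPb := hPc.isBounded
  by_cases h0 : infDist (σ 0) P ≤ C
  · refine ⟨0, ⟨le_refl 0, hL⟩, ?_⟩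
    rw [hp.2]
    linarith
  push_neg at h0
  set f : ℝ → ℝ := fun t => infDist (σ t) P with hf
  have hfc : ContinuousOn f (Set.Icc 0 L) :=
    (Metric.continuous_infDist_pt P).comp_continuousOn (geo_continuousOn hg)
  set A := {t ∈ Set.Icc 0 L | f t ≤ C} with hA
  have hAne : A.Nonempty := by
    by_contra hemp
    rw [Set.not_nonempty_iff_eq_empty] at hemp
    have hfar' : ∀ t ∈ Set.Icc 0 L, C ≤ f t := by
      intro t ht
      by_contra hlt
      exact absurd (Set.eq_empty_iff_forall_notMem.mp hemp t ⟨ht, le_of_not_ge hlt⟩) (by simp)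
    have := contr_pair hc hPb hL hg hfar' hp hq
    linarith
  have hAcl : IsClosed A := by
    have : A = Set.Icc 0 L ∩ f ⁻¹' (Set.Iic C) := by
      ext t; simp [hA, Set.mem_sep_iff]
    rw [this]
    exact hfc.preimage_isClosed_of_isClosed isClosed_Icc isClosed_Iic
  have hAbdd : BddBelow A := ⟨0, fun t ht => ht.1.1⟩
  set t₀ := sInf A with ht₀
  have ht₀A : t₀ ∈ A := hAcl.csInf_mem hAne hAbdd
  have ht₀pos : 0 < t₀ := by
    rcases lt_or_eq_of_le ht₀A.1.1 with h | h
    · exact h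
    · exfalso; rw [← h] at ht₀A; exact absurd ht₀A.2 (not_le.mpr h0)
  have hbefore : ∀ t ∈ Set.Ico 0 t₀, C < f t := by
    intro t ht
    by_contra hle
    exact absurd (csInf_le hAbdd ⟨⟨ht.1, ht.2.le.trans ht₀A.1.2⟩, le_of_not_gt hle⟩)
      (not_le.mpr ht.2)
  have hft₀ : C ≤ f t₀ := by
    have hmem : t₀ ∈ closure (Set.Ico 0 t₀) := by
      rw [closure_Ico ht₀pos.ne]
      exact ⟨ht₀pos.le, le_refl _⟩
    have hne : (𝓝[Set.Ico 0 t₀] t₀).NeBot := mem_closure_iff_nhdsWithin_neBot.mp hmem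
    have htend : Filter.Tendsto f (𝓝[Set.Ico 0 t₀] t₀) (𝓝 (f t₀)) := by
      have := (hfc t₀ ht₀A.1).tendsto
      exact this.mono_left (nhdsWithin_mono _ (fun t ht => ⟨ht.1, ht.2.le.trans ht₀A.1.2⟩))
    refine ge_of_tendsto htend ?_
    filter_upwards [self_mem_nhdsWithin] with t ht
    exact (hbefore t ht).le
  have hfarIcc : ∀ t ∈ Set.Icc 0 t₀, C ≤ f t := by
    intro t ht
    rcases lt_or_eq_of_le ht.2 with h | h
    · exact (hbefore t ⟨ht.1, h⟩).le
    · rw [h]; exact hft₀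
  obtain ⟨p', hp'⟩ := projset_nonempty hPc hPne (σ t₀)
  have h1 : dist p p' ≤ C :=
    contr_pair hc hPb ht₀pos.le (geo_restrict hg (le_refl 0) ht₀A.1.2) hfarIcc hp hp'
  have h2 : dist (σ t₀) p' ≤ C := by rw [hp'.2]; exact ht₀A.2
  refine ⟨t₀, ht₀A.1, ?_⟩
  calc dist (σ t₀) p ≤ dist (σ t₀) p' + dist p' p := dist_triangle _ _ _
  _ ≤ C + C := by rw [dist_comm p' p]; exact add_le_add h2 h1
  _ = 2 * C := by ring

/-- Convexity with common start point: from double application of the CN inequality. -/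
lemma geo_convex_start (hX : IsCAT0 X) {γ₁ γ₂ : ℝ → X} {L₁ L₂ : ℝ}
    (h₁ : IsGeodesicOn γ₁ 0 L₁) (h₂ : IsGeodesicOn γ₂ 0 L₂)
    (hL₁ : 0 ≤ L₁) (hL₂ : 0 ≤ L₂) (h0 : γ₁ 0 = γ₂ 0) {t : ℝ} (ht : t ∈ Set.Icc (0:ℝ) 1) :
    dist (γ₁ (t * L₁)) (γ₂ (t * L₂)) ≤ t * dist (γ₁ L₁) (γ₂ L₂) := by
  obtain ⟨ht0, ht1⟩ := ht
  have htL₁ : t * L₁ ∈ Set.Icc 0 L₁ :=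
    ⟨mul_nonneg ht0 hL₁, mul_le_of_le_one_left hL₁ ht1⟩
  have hmemL₁ : L₁ ∈ Set.Icc 0 L₁ := ⟨hL₁, le_refl _⟩
  have hmem0₁ : (0:ℝ) ∈ Set.Icc 0 L₁ := ⟨le_refl _, hL₁⟩
  have hmemL₂ : L₂ ∈ Set.Icc 0 L₂ := ⟨hL₂, le_refl _⟩
  have hmem0₂ : (0:ℝ) ∈ Set.Icc 0 L₂ := ⟨le_refl _, hL₂⟩
  set x := γ₁ (t * L₁) with hx
  set dab := dist (γ₁ L₁) (γ₂ L₂) with hdab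
  -- CN on γ₂ with point x
  have cn₂ := hX.2 γ₂ 0 L₂ hL₂ h₂ x t ⟨ht0, ht1⟩
  simp only [zero_add, sub_zero] at cn₂
  -- CN on γ₁ with point γ₂ L₂
  have cn₁ := hX.2 γ₁ 0 L₁ hL₁ h₁ (γ₂ L₂) t ⟨ht0, ht1⟩
  simp only [zero_add, sub_zero] at cn₁
  have e₂ : dist (γ₂ 0) (γ₂ L₂) = L₂ := by
    rw [h₂ 0 hmem0₂ L₂ hmemL₂]; rw [abs_of_nonpos (by linarith)]; ring
  have e₁ : dist (γ₁ 0) (γ₁ L₁) = L₁ := by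
    rw [h₁ 0 hmem0₁ L₁ hmemL₁]; rw [abs_of_nonpos (by linarith)]; ring
  have exp : dist x (γ₂ 0) = t * L₁ := by
    rw [← h0, hx, h₁ (t * L₁) htL₁ 0 hmem0₁]
    rw [abs_of_nonneg (by simpa using htL₁.1)]; ring
  have exa : dist x (γ₁ L₁) = (1 - t) * L₁ := by
    rw [hx, h₁ (t * L₁) htL₁ L₁ hmemL₁]
    rw [abs_of_nonpos (by nlinarith)]; ring
  have eb0 : dist (γ₂ L₂) (γ₁ 0) = L₂ := by rw [h0, dist_comm]; exact e₂
  rw [e₂, exp] at cn₂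
  rw [eb0, e₁] at cn₁
  -- substitute cn₁ into cn₂
  have key : dist x (γ₂ (t * L₂)) ^ 2 ≤ (t * dab) ^ 2 := by
    have hb : dist (γ₂ L₂) (γ₁ (t * L₁)) = dist x (γ₂ L₂) := by
      rw [hx, dist_comm]
    rw [hb] at cn₁
    have hd : dist (γ₁ L₁) (γ₂ L₂) = dab := rfl
    have hd' : dist (γ₂ L₂) (γ₁ L₁) = dab := by rw [dist_comm]
    rw [hd'] at cn₁
    nlinarith [cn₂, mul_le_mul_of_nonneg_left cn₁ ht0]
  have h1 : dist x (γ₂ (t * L₂)) ≤ t * dab := by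
    have := Real.sqrt_le_sqrt key
    rwa [Real.sqrt_sq dist_nonneg, Real.sqrt_sq (by positivity)] at this
  exact h1

/-- General convexity of the distance between two geodesics (CAT(0)). -/
lemma geo_convex (hX : IsCAT0 X) {γ₁ γ₂ : ℝ → X} {L₁ L₂ : ℝ}
    (h₁ : IsGeodesicOn γ₁ 0 L₁) (h₂ : IsGeodesicOn γ₂ 0 L₂)
    (hL₁ : 0 ≤ L₁) (hL₂ : 0 ≤ L₂) {t : ℝ} (ht : t ∈ Set.Icc (0:ℝ) 1) :
    dist (γ₁ (t * L₁)) (γ₂ (t * L₂)) ≤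
      (1 - t) * dist (γ₁ 0) (γ₂ 0) + t * dist (γ₁ L₁) (γ₂ L₂) := by
  obtain ⟨δ, hδ, hδ0, hδD⟩ := hX.1 (γ₁ 0) (γ₂ L₂)
  set D := dist (γ₁ 0) (γ₂ L₂) with hD
  have hD0 : 0 ≤ D := dist_nonneg
  have hA : dist (γ₁ (t * L₁)) (δ (t * D)) ≤ t * dist (γ₁ L₁) (γ₂ L₂) := by
    have := geo_convex_start hX h₁ hδ hL₁ hD0 hδ0.symm ht
    rwa [hδD] at this
  have hB : dist (δ (t * D)) (γ₂ (t * L₂)) ≤ (1 - t) * dist (γ₁ 0) (γ₂ 0) := by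
    have hrδ : IsGeodesicOn (fun v => δ (D - v)) 0 D := geo_rev hδ
    have hrγ : IsGeodesicOn (fun v => γ₂ (L₂ - v)) 0 L₂ := geo_rev h₂
    have hcommon : (fun v => δ (D - v)) 0 = (fun v => γ₂ (L₂ - v)) 0 := by
      simp [hδD]
    have ht' : (1 - t) ∈ Set.Icc (0:ℝ) 1 := ⟨by linarith [ht.2], by linarith [ht.1]⟩
    have := geo_convex_start hX hrδ hrγ hD0 hL₂ hcommon ht'
    have eδ : D - (1 - t) * D = t * D := by ring
    have eγ : L₂ - (1 - t) * L₂ = t * L₂ := by ring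
    have eδ2 : D - D = (0:ℝ) := by ring
    have eγ2 : L₂ - L₂ = (0:ℝ) := by ring
    rw [eδ, eγ, eδ2, eγ2, hδ0] at this
    exact this.trans (le_of_eq (by rw [dist_comm]))
  calc dist (γ₁ (t * L₁)) (γ₂ (t * L₂))
      ≤ dist (γ₁ (t * L₁)) (δ (t * D)) + dist (δ (t * D)) (γ₂ (t * L₂)) := dist_triangle _ _ _
  _ ≤ t * dist (γ₁ L₁) (γ₂ L₂) + (1 - t) * dist (γ₁ 0) (γ₂ 0) := add_le_add hA hB
  _ = (1 - t) * dist (γ₁ 0) (γ₂ 0) + t * dist (γ₁ L₁) (γ₂ L₂) := by ring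


end AuxLemmas

/-- **Visibility from a ray recurrent to contracting segments.**
Let `α` be a geodesic ray in a proper CAT(0) space ending at `ξ`, meeting the
`C`-neighborhoods of a sequence of `C`-contracting geodesic segments `Pₙ` in sets of
diameter `≥ 8C` that leave every compact set. Then for every ray `β` from the same
basepoint representing a boundary point `η ≠ ξ`, there is a bi-infinite geodesic
from `ξ` to `η`. -/
theorem visibility_of_recurrent_ray {X : Type*} [MetricSpace X] [ProperSpace X]
    (hX : IsCAT0 X) (α : ℝ≥0 → X) (hα : Isometry α)
    (C : ℝ) (hC : 0 < C) (P : ℕ → Set X)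
    (hseg : ∀ n, ∃ (γ : ℝ → X) (a b : ℝ), a ≤ b ∧ IsGeodesicOn γ a b ∧ P n = γ '' Set.Icc a b)
    (hcontr : ∀ n, IsContractingSet (P n) C)
    (hdiam : ∀ n, 8 * C ≤ Metric.diam {x | x ∈ Set.range α ∧ Metric.infDist x (P n) ≤ C})
    (hescape : ∀ R : ℝ, ∃ N : ℕ, ∀ n ≥ N, ∀ x ∈ Set.range α,
      Metric.infDist x (P n) ≤ C → R ≤ dist (α 0) x)
    (β : ℝ≥0 → X) (hβ : Isometry β) (hβ0 : β 0 = α 0)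
    (hne : ¬ ∃ C' : ℝ, ∀ t : ℝ≥0, dist (α t) (β t) ≤ C') :
    ∃ γ : ℝ → X, Isometry γ ∧ (∃ C₁ : ℝ, ∀ t : ℝ≥0, dist (γ (t : ℝ)) (α t) ≤ C₁) ∧
      (∃ C₂ : ℝ, ∀ t : ℝ≥0, dist (γ (-(t : ℝ))) (β t) ≤ C₂) := by
  classical
  set o := α 0 with ho
  set A : ℝ → X := fun t => α (Real.toNNReal t) with hAdef
  set B : ℝ → X := fun t => β (Real.toNNReal t) with hBdef
  have hAd : ∀ s t : ℝ, 0 ≤ s → 0 ≤ t → dist (A s) (A t) = |s - t| := by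
    intro s t hs ht
    rw [hAdef]
    simp only
    rw [hα.dist_eq, NNReal.dist_eq, Real.coe_toNNReal s hs, Real.coe_toNNReal t ht]
  have hBd : ∀ s t : ℝ, 0 ≤ s → 0 ≤ t → dist (B s) (B t) = |s - t| := by
    intro s t hs ht
    rw [hBdef]
    simp only
    rw [hβ.dist_eq, NNReal.dist_eq, Real.coe_toNNReal s hs, Real.coe_toNNReal t ht]
  have hAgeo : ∀ a b : ℝ, 0 ≤ a → IsGeodesicOn A a b := by
    intro a b ha s hs t ht
    exact hAd s t (ha.trans hs.1) (ha.trans ht.1)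
  have hBgeo : ∀ a b : ℝ, 0 ≤ a → IsGeodesicOn B a b := by
    intro a b ha s hs t ht
    exact hBd s t (ha.trans hs.1) (ha.trans ht.1)
  have hA0 : A 0 = o := by rw [hAdef]; simp [ho]
  have hB0 : B 0 = o := by rw [hBdef]; simp [hβ0, ho]
  have hAc : ∀ t : ℝ≥0, A (t : ℝ) = α t := by
    intro t; rw [hAdef]; simp
  have hBc : ∀ t : ℝ≥0, B (t : ℝ) = β t := by
    intro t; rw [hBdef]; simp
  have hdistoA : ∀ t : ℝ, 0 ≤ t → dist o (A t) = t := by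
    intro t htt
    rw [← hA0, hAd 0 t le_rfl htt, abs_of_nonpos (by linarith)]; ring
  have hdistoB : ∀ t : ℝ, 0 ≤ t → dist o (B t) = t := by
    intro t htt
    rw [← hB0, hBd 0 t le_rfl htt, abs_of_nonpos (by linarith)]; ring
  -- compactness of the P n
  have hPc : ∀ n, IsCompact (P n) := by
    intro n
    obtain ⟨g, a, b, hab, hg, hP⟩ := hseg n
    rw [hP]
    exact isCompact_Icc.image_of_continuousOn (geo_continuousOn hg)
  have hPne : ∀ n, (P n).Nonempty := by
    intro n
    obtain ⟨g, a, b, hab, hg, hP⟩ := hseg n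
    rw [hP]
    exact (Set.nonempty_Icc.mpr hab).image _
  set f : ℕ → ℝ → ℝ := fun n t => infDist (A t) (P n) with hfdef
  have hfc : ∀ n, Continuous (f n) := by
    intro n
    exact (Metric.continuous_infDist_pt (P n)).comp
      ((hα.continuous).comp continuous_real_toNNReal)
  set T : ℕ → Set ℝ := fun n => {t : ℝ | 0 ≤ t ∧ f n t ≤ C} with hTdef
  have hTcl : ∀ n, IsClosed (T n) := by
    intro n
    have : T n = Set.Ici (0:ℝ) ∩ (f n) ⁻¹' (Set.Iic C) := by
      ext t; simp [hTdef, Set.mem_setOf_eq]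
    rw [this]
    exact isClosed_Ici.inter (isClosed_Iic.preimage (hfc n))
  have hTne : ∀ n, (T n).Nonempty := by
    intro n
    have hSne : {x | x ∈ Set.range α ∧ Metric.infDist x (P n) ≤ C}.Nonempty := by
      by_contra hemp
      rw [Set.not_nonempty_iff_eq_empty] at hemp
      have h8 := hdiam n
      rw [hemp] at h8
      simp only [Metric.diam_empty] at h8
      linarith
    obtain ⟨x, hx⟩ := hSne
    obtain ⟨t₀, ht₀⟩ := hx.1
    refine ⟨(t₀ : ℝ), t₀.coe_nonneg, ?_⟩
    show infDist (A (t₀ : ℝ)) (P n) ≤ C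
    rw [hAc t₀, ht₀]
    exact hx.2
  have hTbdd : ∀ n, BddAbove (T n) := by
    intro n
    obtain ⟨y₀, hy₀⟩ := hPne n
    refine ⟨dist o y₀ + Metric.diam (P n) + C, ?_⟩
    intro t ht
    obtain ⟨y, hy, hyd⟩ := (hPc n).exists_infDist_eq_dist (hPne n) (A t)
    have h1 : dist (A t) y ≤ C := by rw [← hyd]; exact ht.2
    have h2 : dist y₀ y ≤ Metric.diam (P n) :=
      Metric.dist_le_diam_of_mem (hPc n).isBounded hy₀ hy
    have h3 : dist o (A t) = t := hdistoA t ht.1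
    calc t = dist o (A t) := h3.symm
    _ ≤ dist o y₀ + dist y₀ y + dist y (A t) := dist_triangle4 _ _ _ _
    _ ≤ dist o y₀ + Metric.diam (P n) + C := by
        rw [dist_comm y (A t)]; exact add_le_add (add_le_add le_rfl h2) h1
  set u : ℕ → ℝ := fun n => sSup (T n) with hudef
  set l : ℕ → ℝ := fun n => sInf (T n) with hldef
  have hTbddb : ∀ n, BddBelow (T n) := fun n => ⟨0, fun t ht => ht.1⟩
  have huT : ∀ n, u n ∈ T n := fun n => (hTcl n).csSup_mem (hTne n) (hTbdd n)
  have hlT : ∀ n, l n ∈ T n := fun n => (hTcl n).csInf_mem (hTne n) (hTbddb n)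
  have hlu : ∀ n, l n ≤ u n := fun n => csInf_le_csSup (hTne n) (hTbddb n) (hTbdd n)
  have hu0 : ∀ n, 0 ≤ u n := fun n => (huT n).1
  have hl0 : ∀ n, 0 ≤ l n := fun n => (hlT n).1
  have h8 : ∀ n, 8 * C ≤ u n - l n := by
    intro n
    have hd := hdiam n
    have hle : Metric.diam {x | x ∈ Set.range α ∧ Metric.infDist x (P n) ≤ C} ≤ u n - l n := by
      apply Metric.diam_le_of_forall_dist_le (by linarith [hlu n])
      rintro x ⟨⟨s, hs⟩, hxP⟩ y ⟨⟨t, htt⟩, hyP⟩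
      have hsT : (s : ℝ) ∈ T n := by
        refine ⟨s.coe_nonneg, ?_⟩
        show infDist (A (s:ℝ)) (P n) ≤ C
        rw [hAc s, hs]; exact hxP
      have htT : (t : ℝ) ∈ T n := by
        refine ⟨t.coe_nonneg, ?_⟩
        show infDist (A (t:ℝ)) (P n) ≤ C
        rw [hAc t, htt]; exact hyP
      have hls : l n ≤ (s:ℝ) := csInf_le (hTbddb n) hsT
      have hus : (s:ℝ) ≤ u n := le_csSup (hTbdd n) hsT
      have hlt : l n ≤ (t:ℝ) := csInf_le (hTbddb n) htT
      have hut : (t:ℝ) ≤ u n := le_csSup (hTbdd n) htT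
      rw [← hs, ← htt, ← hAc s, ← hAc t, hAd _ _ s.coe_nonneg t.coe_nonneg]
      rw [abs_le]
      constructor <;> linarith
    linarith
  -- beyond the last exit the ray is far from P n
  have hfgt : ∀ n, ∀ t : ℝ, u n < t → C < f n t := by
    intro n t htu
    by_contra hle
    have : t ∈ T n := ⟨(hu0 n).trans htu.le, le_of_not_gt hle⟩
    exact absurd (le_csSup (hTbdd n) this) (not_le.mpr htu)
  have hfu : ∀ n, C ≤ f n (u n) := by
    intro n
    have htend : Filter.Tendsto (f n) (𝓝[>] (u n)) (𝓝 (f n (u n))) :=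
      ((hfc n).tendsto (u n)).mono_left nhdsWithin_le_nhds
    refine ge_of_tendsto htend ?_
    filter_upwards [self_mem_nhdsWithin] with t ht
    exact (hfgt n t ht).le
  obtain ⟨N₀, hN₀⟩ := hescape 1
  have hl1 : ∀ n, N₀ ≤ n → 1 ≤ l n := by
    intro n hn
    have := hN₀ n hn (A (l n)) ⟨Real.toNNReal (l n), rfl⟩ (hlT n).2
    rwa [hdistoA (l n) (hl0 n)] at this
  have hflt : ∀ n, N₀ ≤ n → ∀ t : ℝ, t < l n → C < f n t := by
    intro n hn t htl
    rcases le_or_gt 0 t with h0t | h0t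
    · by_contra hle
      have : t ∈ T n := ⟨h0t, le_of_not_gt hle⟩
      exact absurd (csInf_le (hTbddb n) this) (not_le.mpr htl)
    · have hft0 : f n t = f n 0 := by
        show infDist (A t) (P n) = infDist (A 0) (P n)
        rw [hAdef]
        simp only
        rw [Real.toNNReal_of_nonpos h0t.le, Real.toNNReal_zero]
      rw [hft0]
      by_contra hle
      have : (0:ℝ) ∈ T n := ⟨le_rfl, le_of_not_gt hle⟩
      have := csInf_le (hTbddb n) this
      linarith [hl1 n hn]
  have hfl : ∀ n, N₀ ≤ n → C ≤ f n (l n) := by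
    intro n hn
    have htend : Filter.Tendsto (f n) (𝓝[<] (l n)) (𝓝 (f n (l n))) :=
      ((hfc n).tendsto (l n)).mono_left nhdsWithin_le_nhds
    refine ge_of_tendsto htend ?_
    filter_upwards [self_mem_nhdsWithin] with t ht
    exact (hflt n hn t ht).le
  -- projection stability
  have hprojA : ∀ n, ∀ m : ℝ, u n ≤ m → ∀ p ∈ ProjSet (P n) (A m), dist p (A (u n)) ≤ 2*C := by
    intro n m hum p hp
    obtain ⟨p', hp'⟩ := projset_nonempty (hPc n) (hPne n) (A (u n))
    have hfar' : ∀ t ∈ Set.Icc (u n) m, C ≤ infDist (A t) (P n) := by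
      intro t ht
      rcases lt_or_eq_of_le ht.1 with h | h
      · exact (hfgt n t h).le
      · rw [← h]; exact hfu n
    have h1 : dist p' p ≤ C :=
      contr_pair (hcontr n) (hPc n).isBounded hum (hAgeo (u n) m (hu0 n)) hfar' hp' hp
    have h2 : dist (A (u n)) p' ≤ C := by
      rw [hp'.2]; exact (huT n).2
    calc dist p (A (u n)) ≤ dist p p' + dist p' (A (u n)) := dist_triangle _ _ _
    _ ≤ C + C := by
        rw [dist_comm p p', dist_comm p' (A (u n))]; exact add_le_add h1 h2
    _ = 2*C := by ring
  have hproj0 : ∀ n, N₀ ≤ n → ∀ p ∈ ProjSet (P n) o, dist p (A (l n)) ≤ 2*C := by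
    intro n hn p hp
    obtain ⟨p', hp'⟩ := projset_nonempty (hPc n) (hPne n) (A (l n))
    have hfar' : ∀ t ∈ Set.Icc (0:ℝ) (l n), C ≤ infDist (A t) (P n) := by
      intro t ht
      rcases lt_or_eq_of_le ht.2 with h | h
      · exact (hflt n hn t h).le
      · rw [h]; exact hfl n hn
    have hp0 : p ∈ ProjSet (P n) (A 0) := by rw [hA0]; exact hp
    have h1 : dist p p' ≤ C :=
      contr_pair (hcontr n) (hPc n).isBounded (hl0 n) (hAgeo 0 (l n) le_rfl) hfar' hp0 hp'
    have h2 : dist (A (l n)) p' ≤ C := by rw [hp'.2]; exact (hlT n).2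
    calc dist p (A (l n)) ≤ dist p p' + dist p' (A (l n)) := dist_triangle _ _ _
    _ ≤ C + C := by rw [dist_comm p' (A (l n))]; exact add_le_add h1 h2
    _ = 2*C := by ring
  -- the dichotomy
  by_cases hcase : ∃ n, N₀ ≤ n ∧ ∀ᶠ m : ℕ in Filter.atTop,
      ∀ p ∈ ProjSet (P n) (A (m:ℝ)), ∀ q ∈ ProjSet (P n) (B (m:ℝ)), C < dist p q
  · -- Case 1: build the bi-infinite geodesic as an ultrafilter limit
    obtain ⟨n, hnN₀, hGood⟩ := hcase
    rw [Filter.eventually_atTop] at hGood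
    obtain ⟨M₀, hM₀⟩ := hGood
    set M₁ := max M₀ (Nat.ceil (u n) + 1) with hM₁def
    have hM₁u : ∀ k : ℕ, u n < ((M₁ + k : ℕ) : ℝ) := by
      intro k
      have h1 : u n ≤ Nat.ceil (u n) := Nat.le_ceil _
      have h2 : ((Nat.ceil (u n) : ℕ) : ℝ) + 1 ≤ (M₁ : ℝ) := by
        have : Nat.ceil (u n) + 1 ≤ M₁ := le_max_right _ _
        exact_mod_cast this
      have h3 : (M₁ : ℝ) ≤ ((M₁ + k : ℕ) : ℝ) := by exact_mod_cast Nat.le_add_right M₁ k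
      linarith
    have build : ∀ k : ℕ, ∃ (g : ℝ → X) (L s : ℝ),
        IsGeodesicOn g 0 L ∧ g 0 = B ((M₁ + k : ℕ) : ℝ) ∧ g L = A ((M₁ + k : ℕ) : ℝ) ∧
        0 ≤ s ∧ s ≤ L ∧ dist (g s) (A (u n)) ≤ 4*C := by
      intro k
      obtain ⟨g, hg, hg0, hgL⟩ := hX.1 (B ((M₁ + k : ℕ):ℝ)) (A ((M₁ + k : ℕ):ℝ))
      set L := dist (B ((M₁ + k : ℕ):ℝ)) (A ((M₁ + k : ℕ):ℝ)) with hLdef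
      obtain ⟨p, hp⟩ := projset_nonempty (hPc n) (hPne n) (A ((M₁ + k : ℕ):ℝ))
      obtain ⟨q, hq⟩ := projset_nonempty (hPc n) (hPne n) (B ((M₁ + k : ℕ):ℝ))
      have hfarpq : C < dist p q :=
        hM₀ (M₁ + k) (le_trans (le_max_left _ _) (Nat.le_add_right _ _)) p hp q hq
      have hL0 : (0:ℝ) ≤ L := dist_nonneg
      have hrev : IsGeodesicOn (fun v => g (L - v)) 0 L := geo_rev hg
      have hp' : p ∈ ProjSet (P n) ((fun v => g (L - v)) 0) := by
        simp only [sub_zero]; rw [hgL]; exact hp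
      have hq' : q ∈ ProjSet (P n) ((fun v => g (L - v)) L) := by
        simp only [sub_self]; rw [hg0]; exact hq
      obtain ⟨v, hv, hvd⟩ := first_entry hC (hcontr n) (hPc n) (hPne n) hL0 hrev hp' hq' hfarpq
      refine ⟨g, L, L - v, hg, hg0, hgL, by linarith [hv.2], by linarith [hv.1], ?_⟩
      have hpA : dist p (A (u n)) ≤ 2*C := hprojA n ((M₁ + k : ℕ):ℝ) (hM₁u k).le p hp
      calc dist (g (L - v)) (A (u n)) ≤ dist (g (L - v)) p + dist p (A (u n)) :=
        dist_triangle _ _ _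
      _ ≤ 2*C + 2*C := add_le_add hvd hpA
      _ = 4*C := by ring
    choose g L s hgeo hg0 hgL hs0 hsL hnear using build
    set μ : ℕ → ℝ := fun k => ((M₁ + k : ℕ) : ℝ) with hμdef
    have hμ0 : ∀ k, (0:ℝ) ≤ μ k := fun k => Nat.cast_nonneg _
    have hμk : ∀ k : ℕ, (k:ℝ) ≤ μ k := by
      intro k
      rw [hμdef]
      push_cast
      have : (0:ℝ) ≤ (M₁:ℝ) := Nat.cast_nonneg _
      linarith
    have hL0 : ∀ k, (0:ℝ) ≤ L k := fun k => (hs0 k).trans (hsL k)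
    have hzo : ∀ k, dist o (g k (s k)) ≤ u n + 4*C := by
      intro k
      calc dist o (g k (s k)) ≤ dist o (A (u n)) + dist (A (u n)) (g k (s k)) :=
        dist_triangle _ _ _
      _ ≤ u n + 4*C := add_le_add (le_of_eq (hdistoA _ (hu0 n)))
          (by rw [dist_comm]; exact hnear k)
    have hsval : ∀ k, dist (B (μ k)) (g k (s k)) = s k := by
      intro k
      have h := hgeo k 0 ⟨le_rfl, hL0 k⟩ (s k) ⟨hs0 k, hsL k⟩
      rw [hg0 k] at h
      rw [h, zero_sub, abs_neg, abs_of_nonneg (hs0 k)]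
    have hΛval : ∀ k, dist (g k (s k)) (A (μ k)) = L k - s k := by
      intro k
      have h := hgeo k (s k) ⟨hs0 k, hsL k⟩ (L k) ⟨hL0 k, le_rfl⟩
      rw [hgL k] at h
      rw [h, abs_of_nonpos (by linarith [hsL k])]
      ring
    have hs_lb : ∀ k, μ k - (u n + 4*C) ≤ s k := by
      intro k
      have h1 : dist o (B (μ k)) = μ k := hdistoB _ (hμ0 k)
      have h2 := dist_triangle o (g k (s k)) (B (μ k))
      rw [dist_comm (g k (s k)) (B (μ k)), hsval k] at h2
      linarith [hzo k, h1, h2]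
    have hs_ub : ∀ k, s k ≤ μ k + (u n + 4*C) := by
      intro k
      have h1 : dist o (B (μ k)) = μ k := hdistoB _ (hμ0 k)
      have h2 := dist_triangle (B (μ k)) o (g k (s k))
      rw [hsval k, dist_comm (B (μ k)) o, h1] at h2
      linarith [hzo k]
    have hΛ_lb : ∀ k, μ k - u n - 4*C ≤ L k - s k := by
      intro k
      have h1 : dist (A (u n)) (A (μ k)) = μ k - u n := by
        rw [hAd _ _ (hu0 n) (hμ0 k), abs_of_nonpos (by linarith [hM₁u k])]; ring
      have h2 := dist_triangle (A (u n)) (g k (s k)) (A (μ k))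
      rw [hΛval k] at h2
      have h3 : dist (A (u n)) (g k (s k)) ≤ 4*C := by rw [dist_comm]; exact hnear k
      linarith
    have hΛ_ub : ∀ k, L k - s k ≤ μ k - u n + 4*C := by
      intro k
      have h1 : dist (A (u n)) (A (μ k)) = μ k - u n := by
        rw [hAd _ _ (hu0 n) (hμ0 k), abs_of_nonpos (by linarith [hM₁u k])]; ring
      have h2 := dist_triangle (g k (s k)) (A (u n)) (A (μ k))
      rw [hΛval k] at h2
      linarith [hnear k]
    have hbig : ∀ R : ℝ, ∀ᶠ k : ℕ in Filter.atTop, R ≤ s k ∧ R ≤ L k - s k := by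
      intro R
      obtain ⟨K, hK⟩ := exists_nat_ge (R + u n + 4*C)
      rw [Filter.eventually_atTop]
      refine ⟨K, fun k hk => ?_⟩
      have h1 : R + u n + 4*C ≤ (k:ℝ) := hK.trans (by exact_mod_cast hk)
      have h2 : (k:ℝ) ≤ μ k := hμk k
      exact ⟨by linarith [hs_lb k], by linarith [hΛ_lb k]⟩
    -- the clamped maps
    set c : ℕ → ℝ → ℝ := fun k t => max 0 (min t (L k)) with hcdef
    have hcmem : ∀ k t, c k t ∈ Set.Icc 0 (L k) :=
      fun k t => ⟨le_max_left _ _, max_le (hL0 k) (min_le_right _ _)⟩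
    have hclip : ∀ k t, t ∈ Set.Icc 0 (L k) → c k t = t := by
      intro k t ht
      rw [hcdef]
      simp only
      rw [min_eq_left ht.2, max_eq_right ht.1]
    have hclipschitz : ∀ k t t', |c k t - c k t'| ≤ |t - t'| := by
      intro k t t'
      have h1 : |min t (L k) - min t' (L k)| ≤ max |t - t'| |L k - L k| :=
        abs_min_sub_min_le_max _ _ _ _
      rw [sub_self, abs_zero, max_eq_left (abs_nonneg _)] at h1
      have h2 : |c k t - c k t'| ≤ |min t (L k) - min t' (L k)| := by
        rw [hcdef]
        simp only
        rw [max_comm 0 (min t (L k)), max_comm 0 (min t' (L k))]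
        exact abs_max_sub_max_le_abs _ _ _
      exact h2.trans h1
    set w : ℕ → ℝ → X := fun k t => g k (c k (s k + t)) with hwdef
    have hwin : ∀ k (t : ℝ), 0 ≤ s k + t → s k + t ≤ L k → w k t = g k (s k + t) := by
      intro k t h1 h2
      rw [hwdef]
      simp only
      rw [hclip k _ ⟨h1, h2⟩]
    have hw0 : ∀ k, w k 0 = g k (s k) := by
      intro k
      rw [hwin k 0 (by rw [add_zero]; exact hs0 k) (by rw [add_zero]; exact hsL k), add_zero]
    have hwlip : ∀ k t t', dist (w k t) (w k t') ≤ |t - t'| := by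
      intro k t t'
      rw [hwdef]
      simp only
      rw [hgeo k _ (hcmem k _) _ (hcmem k _)]
      exact (hclipschitz k _ _).trans (le_of_eq (by rw [add_sub_add_left_eq_sub]))
    have hwball : ∀ (t : ℝ) k, w k t ∈ Metric.closedBall (A (u n)) (4*C + |t|) := by
      intro t k
      rw [Metric.mem_closedBall]
      calc dist (w k t) (A (u n)) ≤ dist (w k t) (w k 0) + dist (w k 0) (A (u n)) :=
        dist_triangle _ _ _
      _ ≤ |t - 0| + 4*C := add_le_add (hwlip k t 0) (by rw [hw0 k]; exact hnear k)
      _ = 4*C + |t| := by rw [sub_zero]; ring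
    -- ultrafilter limit
    set F : Ultrafilter ℕ := Ultrafilter.of Filter.atTop with hFdef
    have hFle : (F : Filter ℕ) ≤ Filter.atTop := Ultrafilter.of_le _
    have hlim : ∀ t : ℝ, ∃ x : X, Filter.Tendsto (fun k => w k t) (F : Filter ℕ) (𝓝 x) := by
      intro t
      have hcomp : IsCompact (Metric.closedBall (A (u n)) (4*C + |t|)) :=
        isCompact_closedBall _ _
      obtain ⟨x, _, hx⟩ := hcomp.ultrafilter_le_nhds (F.map (fun k => w k t))
        (by
          rw [Ultrafilter.coe_map, Filter.le_principal_iff, Filter.mem_map]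
          exact Filter.univ_mem' (fun k => hwball t k))
      refine ⟨x, ?_⟩
      rwa [Ultrafilter.coe_map] at hx
    choose γfun hγ using hlim
    have hiso : Isometry γfun := by
      apply Isometry.of_dist_eq
      intro t t'
      have hev : ∀ᶠ k in (F : Filter ℕ), dist (w k t) (w k t') = |t - t'| := by
        apply hFle
        filter_upwards [hbig (max |t| |t'|)] with k hk
        have h1 : 0 ≤ s k + t := by
          have := neg_abs_le t
          have h2 := (le_max_left |t| |t'|).trans hk.1
          linarith
        have h2 : s k + t ≤ L k := by
          have := le_abs_self t
          have h3 := (le_max_left |t| |t'|).trans hk.2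
          linarith
        have h1' : 0 ≤ s k + t' := by
          have := neg_abs_le t'
          have h2 := (le_max_right |t| |t'|).trans hk.1
          linarith
        have h2' : s k + t' ≤ L k := by
          have := le_abs_self t'
          have h3 := (le_max_right |t| |t'|).trans hk.2
          linarith
        rw [hwin k t h1 h2, hwin k t' h1' h2',
          hgeo k _ ⟨h1, h2⟩ _ ⟨h1', h2'⟩, add_sub_add_left_eq_sub]
      have hd := Filter.Tendsto.dist (hγ t) (hγ t')
      have hconst : Filter.Tendsto (fun k => dist (w k t) (w k t')) (F : Filter ℕ)
          (𝓝 |t - t'|) :=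
        Filter.Tendsto.congr' (by filter_upwards [hev] with k hk; exact hk.symm)
          tendsto_const_nhds
      rw [tendsto_nhds_unique hd hconst, Real.dist_eq]
    have hforward : ∀ t : ℝ≥0, dist (γfun (t:ℝ)) (A (u n + (t:ℝ))) ≤ 4*C + 1 := by
      intro t
      have ht0 : (0:ℝ) ≤ (t:ℝ) := t.coe_nonneg
      refine le_of_tendsto (Filter.Tendsto.dist (hγ (t:ℝ)) tendsto_const_nhds) ?_
      apply hFle
      filter_upwards [hbig (max (max 1 (t:ℝ)) (4*C*(t:ℝ)))] with k hk
      have hΛ1 : 1 ≤ L k - s k := le_trans (le_trans (le_max_left _ _) (le_max_left _ _)) hk.2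
      have hΛt : (t:ℝ) ≤ L k - s k :=
        le_trans (le_trans (le_max_right _ _) (le_max_left _ _)) hk.2
      have hΛ4Ct : 4*C*(t:ℝ) ≤ L k - s k := le_trans (le_max_right _ _) hk.2
      have hΛpos : 0 < L k - s k := lt_of_lt_of_le one_pos hΛ1
      have hγ₁ : IsGeodesicOn (fun v => g k (s k + v)) 0 (L k - s k) :=
        geo_shift (geo_restrict (hgeo k) (hs0 k) le_rfl)
      have hγ₂ : IsGeodesicOn (fun v => A (u n + v)) 0 (μ k - u n) :=
        geo_shift (hAgeo (u n) (μ k) (hu0 n))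
      set tt := (t:ℝ) / (L k - s k) with httdef
      have htt01 : tt ∈ Set.Icc (0:ℝ) 1 :=
        ⟨div_nonneg ht0 hΛpos.le, (div_le_one hΛpos).mpr hΛt⟩
      have hconv := geo_convex hX hγ₁ hγ₂ (by linarith) (by linarith [hM₁u k]) htt01
      have e3 : tt * (L k - s k) = (t:ℝ) := div_mul_cancel₀ _ hΛpos.ne'
      have e1 : s k + (L k - s k) = L k := by ring
      have e2 : u n + (μ k - u n) = μ k := by ring
      rw [e3, e1, e2, add_zero, add_zero, hgL k, dist_self] at hconv
      -- hconv : dist (g k (s k + t)) (A (u n + tt*(μ k - u n))) ≤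
      --            (1 - tt) * dist (g k (s k)) (A (u n)) + tt * 0
      have hE : dist (g k (s k)) (A (u n)) ≤ 4*C := hnear k
      have hd0 : dist (g k (s k + (t:ℝ))) (A (u n + tt * (μ k - u n))) ≤ 4*C := by
        refine hconv.trans ?_
        have h1tt : 0 ≤ 1 - tt := by linarith [htt01.2]
        have : (1 - tt) * dist (g k (s k)) (A (u n)) ≤ 1 * (4*C) :=
          mul_le_mul (by linarith [htt01.1]) hE dist_nonneg one_pos.le
        linarith
      have hwkt : w k (t:ℝ) = g k (s k + (t:ℝ)) :=
        hwin k (t:ℝ) (by linarith [hs0 k]) (by linarith [hΛt])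
      have hshift : dist (A (u n + tt * (μ k - u n))) (A (u n + (t:ℝ))) ≤ 1 := by
        have hnn1 : 0 ≤ u n + tt * (μ k - u n) := by
          have : 0 ≤ tt * (μ k - u n) :=
            mul_nonneg htt01.1 (by linarith [hM₁u k])
          linarith [hu0 n]
        have hnn2 : 0 ≤ u n + (t:ℝ) := by linarith [hu0 n]
        rw [hAd _ _ hnn1 hnn2]
        have hid : u n + tt * (μ k - u n) - (u n + (t:ℝ)) = tt * ((μ k - u n) - (L k - s k)) := by
          rw [← e3]; ring
        rw [hid, abs_mul, abs_of_nonneg htt01.1]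
        have habs : |(μ k - u n) - (L k - s k)| ≤ 4*C :=
          abs_le.mpr ⟨by linarith [hΛ_ub k], by linarith [hΛ_lb k]⟩
        calc tt * |(μ k - u n) - (L k - s k)| ≤ tt * (4*C) :=
          mul_le_mul_of_nonneg_left habs htt01.1
        _ = (4*C*(t:ℝ)) / (L k - s k) := by rw [httdef]; ring
        _ ≤ 1 := (div_le_one hΛpos).mpr hΛ4Ct
      calc dist (w k (t:ℝ)) (A (u n + (t:ℝ)))
          ≤ dist (w k (t:ℝ)) (A (u n + tt * (μ k - u n))) +
            dist (A (u n + tt * (μ k - u n))) (A (u n + (t:ℝ))) := dist_triangle _ _ _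
      _ ≤ 4*C + 1 := add_le_add (by rw [hwkt]; exact hd0) hshift
    have hbackward : ∀ t : ℝ≥0, dist (γfun (-(t:ℝ))) (B (t:ℝ)) ≤ u n + 4*C + 1 := by
      intro t
      have ht0 : (0:ℝ) ≤ (t:ℝ) := t.coe_nonneg
      refine le_of_tendsto (Filter.Tendsto.dist (hγ (-(t:ℝ))) tendsto_const_nhds) ?_
      apply hFle
      filter_upwards [hbig (max (max 1 (t:ℝ)) ((u n + 4*C)*(t:ℝ)))] with k hk
      have hs1 : 1 ≤ s k := le_trans (le_trans (le_max_left _ _) (le_max_left _ _)) hk.1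
      have hst : (t:ℝ) ≤ s k :=
        le_trans (le_trans (le_max_right _ _) (le_max_left _ _)) hk.1
      have hsc : (u n + 4*C)*(t:ℝ) ≤ s k := le_trans (le_max_right _ _) hk.1
      have hspos : 0 < s k := lt_of_lt_of_le one_pos hs1
      have hγ₁ : IsGeodesicOn (g k) 0 (s k) := geo_restrict (hgeo k) le_rfl (hsL k)
      have hγ₂ : IsGeodesicOn (fun v => B (μ k - v)) 0 (μ k) :=
        geo_rev (hBgeo 0 (μ k) le_rfl)
      have hcommon : g k 0 = (fun v => B (μ k - v)) 0 := by
        simp only [sub_zero]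
        exact hg0 k
      set uu := (s k - (t:ℝ)) / s k with huudef
      have huu01 : uu ∈ Set.Icc (0:ℝ) 1 :=
        ⟨div_nonneg (by linarith) hspos.le, (div_le_one hspos).mpr (by linarith)⟩
      have hconv := geo_convex_start hX hγ₁ hγ₂ hspos.le (hμ0 k) hcommon huu01
      have e1 : uu * s k = s k - (t:ℝ) := div_mul_cancel₀ _ hspos.ne'
      rw [e1, sub_self, hB0] at hconv
      -- hconv : dist (g k (s k - t)) (B (μ k - uu * μ k)) ≤ uu * dist (g k (s k)) o
      have hgo : dist (g k (s k)) o ≤ u n + 4*C := by rw [dist_comm]; exact hzo k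
      have hA1 : dist (g k (s k - (t:ℝ))) (B (μ k - uu * μ k)) ≤ u n + 4*C := by
        refine hconv.trans ?_
        calc uu * dist (g k (s k)) o ≤ 1 * (u n + 4*C) :=
          mul_le_mul huu01.2 hgo dist_nonneg one_pos.le
        _ = u n + 4*C := by ring
      have hwkt : w k (-(t:ℝ)) = g k (s k - (t:ℝ)) := by
        have h := hwin k (-(t:ℝ)) (by linarith) (by linarith [hsL k])
        rw [h, sub_eq_add_neg]
      have hnn1 : 0 ≤ μ k - uu * μ k := by
        have huu1 : uu ≤ 1 := huu01.2
        nlinarith [hμ0 k, huu01.1]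
      have hBdist : dist (B (μ k - uu * μ k)) (B (t:ℝ)) ≤ 1 := by
        rw [hBd _ _ hnn1 ht0]
        have hμs : |μ k - s k| ≤ u n + 4*C :=
          abs_le.mpr ⟨by linarith [hs_ub k], by linarith [hs_lb k]⟩
        have hid : μ k - uu * μ k - (t:ℝ) = ((t:ℝ) / s k) * (μ k - s k) := by
          rw [huudef]
          field_simp
          ring
        rw [hid, abs_mul, abs_of_nonneg (div_nonneg ht0 hspos.le)]
        calc (t:ℝ) / s k * |μ k - s k| ≤ (t:ℝ) / s k * (u n + 4*C) :=
          mul_le_mul_of_nonneg_left hμs (div_nonneg ht0 hspos.le)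
        _ = ((u n + 4*C)*(t:ℝ)) / s k := by ring
        _ ≤ 1 := (div_le_one hspos).mpr hsc
      calc dist (w k (-(t:ℝ))) (B (t:ℝ))
          ≤ dist (w k (-(t:ℝ))) (B (μ k - uu * μ k)) + dist (B (μ k - uu * μ k)) (B (t:ℝ)) :=
        dist_triangle _ _ _
      _ ≤ (u n + 4*C) + 1 := add_le_add (by rw [hwkt]; exact hA1) hBdist
      _ = u n + 4*C + 1 := by ring
    refine ⟨γfun, hiso, ⟨4*C + 1 + u n, fun t => ?_⟩, ⟨u n + 4*C + 1, fun t => ?_⟩⟩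
    · have h1 := hforward t
      have h2 : dist (A (u n + (t:ℝ))) (A (t:ℝ)) = u n := by
        rw [hAd _ _ (by have := hu0 n; have := t.coe_nonneg; linarith) t.coe_nonneg]
        rw [abs_of_nonneg (by linarith [hu0 n])]
        ring
      calc dist (γfun (t:ℝ)) (α t)
          ≤ dist (γfun (t:ℝ)) (A (u n + (t:ℝ))) + dist (A (u n + (t:ℝ))) (α t) :=
        dist_triangle _ _ _
      _ ≤ (4*C + 1) + u n := by
          rw [← hAc t]
          exact add_le_add h1 (le_of_eq h2)
      _ = 4*C + 1 + u n := by ring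
    · have h1 := hbackward t
      rw [hBc t] at h1
      exact h1

  · -- Case 2: β stays boundedly close to α, contradicting hne
    exfalso
    push_neg at hcase
    have key2 : ∀ n, N₀ ≤ n → ∃ s : ℝ, 0 ≤ s ∧ dist (B s) (A (l n)) ≤ 4*C ∧ |s - l n| ≤ 4*C := by
      intro n hn
      have hfreq := Filter.not_eventually.mp (hcase n hn)
      rw [Filter.frequently_atTop] at hfreq
      obtain ⟨m, hm, hnot⟩ := hfreq (Nat.ceil (u n))
      push_neg at hnot
      obtain ⟨p, hp, q, hq, hpq⟩ := hnot
      have hum : u n ≤ (m:ℝ) := le_trans (Nat.le_ceil (u n)) (by exact_mod_cast hm)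
      have hqu : dist q (A (u n)) ≤ 3*C := by
        have h2 := hprojA n m hum p hp
        calc dist q (A (u n)) ≤ dist q p + dist p (A (u n)) := dist_triangle _ _ _
        _ ≤ C + 2*C := add_le_add (by rw [dist_comm]; exact hpq) h2
        _ = 3*C := by ring
      obtain ⟨po, hpo⟩ := projset_nonempty (hPc n) (hPne n) o
      have hpol : dist po (A (l n)) ≤ 2*C := hproj0 n hn po hpo
      have hfar2 : C < dist po q := by
        have h1 : dist (A (l n)) (A (u n)) = u n - l n := by
          rw [hAd _ _ (hl0 n) (hu0 n), abs_of_nonpos (by linarith [hlu n])]; ring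
        have h2 : dist (A (l n)) (A (u n)) ≤
            dist (A (l n)) po + dist po q + dist q (A (u n)) := dist_triangle4 _ _ _ _
        have h3 : dist (A (l n)) po = dist po (A (l n)) := dist_comm _ _
        have h4 := h8 n
        linarith
      have hpoB : po ∈ ProjSet (P n) (B 0) := by rw [hB0]; exact hpo
      obtain ⟨s, hsmem, hsd⟩ := first_entry hC (hcontr n) (hPc n) (hPne n)
        (Nat.cast_nonneg m) (hBgeo 0 (m:ℝ) le_rfl) hpoB hq hfar2
      refine ⟨s, hsmem.1, ?_, ?_⟩
      · calc dist (B s) (A (l n)) ≤ dist (B s) po + dist po (A (l n)) := dist_triangle _ _ _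
        _ ≤ 2*C + 2*C := add_le_add hsd hpol
        _ = 4*C := by ring
      · have habs : |dist (B s) o - dist (A (l n)) o| ≤ dist (B s) (A (l n)) :=
          abs_dist_sub_le _ _ _
        rw [dist_comm (B s) o, dist_comm (A (l n)) o, hdistoB s hsmem.1,
          hdistoA (l n) (hl0 n)] at habs
        refine habs.trans ?_
        calc dist (B s) (A (l n)) ≤ dist (B s) po + dist po (A (l n)) := dist_triangle _ _ _
        _ ≤ 2*C + 2*C := add_le_add hsd hpol
        _ = 4*C := by ring
    apply hne
    refine ⟨8*C, fun t => ?_⟩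
    obtain ⟨N₁, hN₁⟩ := hescape ((t:ℝ)+1)
    set n := max N₁ N₀ with hndef
    have hn0 : N₀ ≤ n := le_max_right _ _
    have hln : (t:ℝ) < l n := by
      have := hN₁ n (le_max_left _ _) (A (l n)) ⟨Real.toNNReal (l n), rfl⟩ (hlT n).2
      rw [hdistoA _ (hl0 n)] at this
      linarith
    obtain ⟨s, hs0, hsA, hsl⟩ := key2 n hn0
    have hlpos : 0 < l n := lt_of_le_of_lt t.coe_nonneg hln
    set tt := (t:ℝ) / l n with htt
    have htt01 : tt ∈ Set.Icc (0:ℝ) 1 :=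
      ⟨div_nonneg t.coe_nonneg hlpos.le, (div_le_one hlpos).mpr hln.le⟩
    have hconv := geo_convex_start hX (hAgeo 0 (l n) le_rfl) (hBgeo 0 s le_rfl)
      (hl0 n) hs0 (by rw [hA0, hB0]) htt01
    have e1 : tt * l n = (t:ℝ) := div_mul_cancel₀ _ hlpos.ne'
    have h4C : (0:ℝ) ≤ 4*C := by linarith
    have hd1 : dist (A (t:ℝ)) (B (tt*s)) ≤ 4*C := by
      rw [← e1]
      refine hconv.trans ?_
      have hALB : dist (A (l n)) (B s) ≤ 4*C := by rw [dist_comm]; exact hsA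
      calc tt * dist (A (l n)) (B s) ≤ 1 * (4*C) :=
        mul_le_mul htt01.2 hALB dist_nonneg one_pos.le
      _ = 4*C := by ring
    have hd2 : dist (B (tt*s)) (B (t:ℝ)) ≤ 4*C := by
      rw [hBd _ _ (mul_nonneg htt01.1 hs0) t.coe_nonneg]
      have e2 : tt * s - (t:ℝ) = tt * (s - l n) := by rw [← e1]; ring
      rw [e2, abs_mul, abs_of_nonneg htt01.1]
      calc tt * |s - l n| ≤ 1 * (4*C) := mul_le_mul htt01.2 hsl (abs_nonneg _) one_pos.le
      _ = 4*C := by ring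
    calc dist (α t) (β t) = dist (A (t:ℝ)) (B (t:ℝ)) := by rw [hAc, hBc]
    _ ≤ dist (A (t:ℝ)) (B (tt*s)) + dist (B (tt*s)) (B (t:ℝ)) := dist_triangle _ _ _
    _ ≤ 4*C + 4*C := add_le_add hd1 hd2
    _ = 8*C := by ring
end

section
/- Let f be a hyperbolic isometry of a proper CAT(0) space X that is not rank-one, and let γ be a geodesic ray contained in Min(f). Then γ is contained in a flat quadrant, i.e., an isometrically embedded copy of {(x,y) ∈ 𝔼² : x ≥ 0, y ≥ 0}. -/
open scoped NNReal

section Aux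

private lemma sqle {x y : ℝ} (hx : 0 ≤ x) (hy : 0 ≤ y) (h : x ^ 2 ≤ y ^ 2) :
    x ≤ y := by nlinarith

variable {X : Type*} [MetricSpace X]

private lemma geodesic_reverse {σ : ℝ → X} {a b : ℝ} (h : IsGeodesicOn σ a b) :
    IsGeodesicOn (fun x => σ (a + b - x)) a b := by
  intro s hs t ht
  have h1 : a + b - s ∈ Set.Icc a b := by constructor <;> [linarith [hs.2]; linarith [hs.1]]
  have h2 : a + b - t ∈ Set.Icc a b := by constructor <;> [linarith [ht.2]; linarith [ht.1]]
  rw [h _ h1 _ h2]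
  rw [abs_sub_comm]; congr 1; ring

/-- convexity with shared start point -/
private lemma convS (hX : IsCAT0 X) {σ σ' : ℝ → X} {a b a' b' : ℝ}
    (hab : a ≤ b) (hab' : a' ≤ b')
    (h : IsGeodesicOn σ a b) (h' : IsGeodesicOn σ' a' b')
    (hstart : σ a = σ' a') {t : ℝ} (ht : t ∈ Set.Icc (0:ℝ) 1) :
    dist (σ (a + t * (b - a))) (σ' (a' + t * (b' - a'))) ≤ t * dist (σ b) (σ' b') := by
  obtain ⟨ht0, ht1⟩ := ht
  have hmem : a + t * (b - a) ∈ Set.Icc a b := by constructor <;> nlinarith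
  have hmema : a ∈ Set.Icc a b := ⟨le_refl _, hab⟩
  have hmemb : b ∈ Set.Icc a b := ⟨hab, le_refl _⟩
  have hmema' : a' ∈ Set.Icc a' b' := ⟨le_refl _, hab'⟩
  have hmemb' : b' ∈ Set.Icc a' b' := ⟨hab', le_refl _⟩
  have dℓ : dist (σ a) (σ b) = b - a := by
    rw [h _ hmema _ hmemb, abs_of_nonpos (by linarith)]; ring
  have dℓ' : dist (σ' a') (σ' b') = b' - a' := by
    rw [h' _ hmema' _ hmemb', abs_of_nonpos (by linarith)]; ring
  have CN1 := hX.2 σ' a' b' hab' h' (σ (a + t * (b - a))) t ⟨ht0, ht1⟩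
  have CN2 := hX.2 σ a b hab h (σ' b') t ⟨ht0, ht1⟩
  rw [dℓ'] at CN1
  have F1' : dist (σ (a + t * (b - a))) (σ' a') = t * (b - a) := by
    rw [← hstart, h _ hmem _ hmema, abs_of_nonneg (by nlinarith)]; ring
  rw [F1'] at CN1
  rw [dℓ] at CN2
  have G1 : dist (σ' b') (σ a) = b' - a' := by rw [dist_comm, hstart]; exact dℓ'
  rw [G1] at CN2
  rw [dist_comm (σ' b') (σ (a + t * (b - a)))] at CN2
  rw [dist_comm (σ' b') (σ b)] at CN2
  have hsq : dist (σ (a + t * (b - a))) (σ' (a' + t * (b' - a'))) ^ 2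
      ≤ (t * dist (σ b) (σ' b')) ^ 2 := by
    nlinarith [CN1, CN2, mul_le_mul_of_nonneg_left CN2 ht0]
  exact sqle dist_nonneg (by positivity) hsq

/-- general convexity between two geodesics -/
private lemma conv2 (hX : IsCAT0 X) {σ σ' : ℝ → X} {a b a' b' : ℝ}
    (hab : a ≤ b) (hab' : a' ≤ b')
    (h : IsGeodesicOn σ a b) (h' : IsGeodesicOn σ' a' b')
    {t : ℝ} (ht : t ∈ Set.Icc (0:ℝ) 1) :
    dist (σ (a + t * (b - a))) (σ' (a' + t * (b' - a')))
      ≤ (1 - t) * dist (σ a) (σ' a') + t * dist (σ b) (σ' b') := by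
  obtain ⟨η, hη, hη0, hηm⟩ := hX.1 (σ a) (σ' b')
  set m := dist (σ a) (σ' b') with hm
  have hm0 : (0:ℝ) ≤ m := dist_nonneg
  have step1 : dist (σ (a + t * (b - a))) (η (0 + t * (m - 0))) ≤ t * dist (σ b) (σ' b') := by
    have := convS hX hab hm0 h hη hη0.symm ht
    rwa [hηm] at this
  have hrev : IsGeodesicOn (fun x => η (0 + m - x)) 0 m := geodesic_reverse hη
  have hrev' : IsGeodesicOn (fun x => σ' (a' + b' - x)) a' b' := geodesic_reverse h'
  have ht' : 1 - t ∈ Set.Icc (0:ℝ) 1 := ⟨by linarith [ht.2], by linarith [ht.1]⟩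
  have step2 : dist (η (0 + m - (0 + (1-t) * (m - 0)))) (σ' (a' + b' - (a' + (1-t) * (b' - a'))))
      ≤ (1 - t) * dist (η (0 + m - m)) (σ' (a' + b' - b')) := by
    have hst : (fun x => η (0 + m - x)) 0 = (fun x => σ' (a' + b' - x)) a' := by
      simp only []
      rw [show (0:ℝ) + m - 0 = m by ring, show a' + b' - a' = b' by ring, hηm]
    have := convS hX hm0 hab' hrev hrev' hst ht'
    simpa using this
  have e1 : 0 + m - (0 + (1-t) * (m - 0)) = 0 + t * (m - 0) := by ring
  have e2 : a' + b' - (a' + (1-t) * (b' - a')) = a' + t * (b' - a') := by ring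
  have e3 : (0:ℝ) + m - m = 0 := by ring
  have e4 : a' + b' - b' = a' := by ring
  rw [e1, e2, e3, e4, hη0] at step2
  calc dist (σ (a + t * (b - a))) (σ' (a' + t * (b' - a')))
      ≤ dist (σ (a + t * (b - a))) (η (0 + t * (m - 0)))
        + dist (η (0 + t * (m - 0))) (σ' (a' + t * (b' - a'))) := dist_triangle _ _ _
    _ ≤ t * dist (σ b) (σ' b') + (1 - t) * dist (σ a) (σ' a') := by
        exact add_le_add step1 step2
    _ = (1 - t) * dist (σ a) (σ' a') + t * dist (σ b) (σ' b') := by ring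

/-- a convex periodic real function is constant -/
private lemma convex_periodic_const {h : ℝ → ℝ} {τ : ℝ} (hpos : 0 < τ)
    (hconv : ∀ x y t : ℝ, x ≤ y → 0 ≤ t → t ≤ 1 → h (x + t * (y - x)) ≤ (1 - t) * h x + t * h y)
    (hper : ∀ x, h (x + τ) = h x) : ∀ x y, h x = h y := by
  have hperN : ∀ (n : ℕ) (x : ℝ), h (x + n * τ) = h x := by
    intro n
    induction n with
    | zero => intro x; simp
    | succ n ih =>
      intro x
      have : x + (n+1 : ℕ) * τ = (x + τ) + n * τ := by push_cast; ring
      rw [this, ih, hper]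
  have step : ∀ x y : ℝ, x ≤ y → h y ≤ h x := by
    intro x y hxy
    obtain ⟨n, hn⟩ := exists_nat_ge ((y - x) / τ)
    rcases Nat.eq_zero_or_pos n with h0 | hn1
    · subst h0
      simp only [Nat.cast_zero] at hn
      have : y ≤ x := by
        have := (div_le_iff₀ hpos).mp (le_trans hn (le_refl 0)) 
        linarith
      have hxy' : x = y := le_antisymm hxy this
      rw [hxy']
    · have hL : 0 < (n:ℝ) * τ := by positivity
      have hyx : y - x ≤ (n:ℝ) * τ := by
        have := (div_le_iff₀ hpos).mp hn
        linarith
      set t := (y - x) / ((n:ℝ) * τ) with htdef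
      have ht0 : 0 ≤ t := div_nonneg (by linarith) (le_of_lt hL)
      have ht1 : t ≤ 1 := by
        rw [div_le_one hL]; exact hyx
      have hne : ((n:ℝ) * τ) ≠ 0 := ne_of_gt hL
      have harg : x + t * ((x + (n:ℝ) * τ) - x) = y := by
        rw [htdef, show (x + (n:ℝ)*τ) - x = (n:ℝ)*τ by ring, div_mul_cancel₀ _ hne]; ring
      have := hconv x (x + n * τ) t (by linarith) ht0 ht1
      rw [harg, hperN n x] at this
      linarith
  intro x y
  rcases le_total x y with hxy | hxy
  · refine le_antisymm ?_ (step x y hxy)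
    obtain ⟨n, hn⟩ := exists_nat_ge ((y - x) / τ)
    have : y ≤ x + n * τ := by
      have := (div_le_iff₀ hpos).mp hn; linarith
    have h2 := step y (x + n * τ) this
    rw [hperN n x] at h2
    exact h2
  · refine le_antisymm (step y x hxy) ?_
    obtain ⟨n, hn⟩ := exists_nat_ge ((x - y) / τ)
    have : x ≤ y + n * τ := by
      have := (div_le_iff₀ hpos).mp hn; linarith
    have h2 := step x (y + n * τ) this
    rw [hperN n y] at h2
    exact h2

end Aux

section Axis

variable {X : Type*} [MetricSpace X]

private lemma exists_axis (hX : IsCAT0 X) {f : X → X} (hiso : Isometry f)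
    (hsurj : Function.Surjective f) {τ : ℝ} (hpos : 0 < τ)
    (hlow : ∀ z : X, τ ≤ dist (f z) z) {p : X} (hp : dist (f p) p = τ) :
    ∃ c : ℝ → X, (∀ s t, dist (c s) (c t) = |s - t|) ∧ c 0 = p ∧ ∀ t, f (c t) = c (t + τ) := by
  classical
  -- inverse of f
  set g : X → X := fun y => (hsurj y).choose with hgdef
  have hg : ∀ y, f (g y) = y := fun y => (hsurj y).choose_spec
  have hgf : ∀ x, g (f x) = x := fun x => hiso.injective (hg (f x))
  -- iterates
  set F : ℤ → X → X := fun n => if 0 ≤ n then f^[n.toNat] else g^[(-n).toNat] with hFdef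
  have fIt_dist : ∀ (k : ℕ) (a b : X), dist (f^[k] a) (f^[k] b) = dist a b := by
    intro k; induction k with
    | zero => intro a b; simp
    | succ k ih => intro a b; simp only [Function.iterate_succ_apply']; rw [hiso.dist_eq, ih]
  have gdist : ∀ a b, dist (g a) (g b) = dist a b := by
    intro a b; conv_rhs => rw [← hg a, ← hg b]
    rw [hiso.dist_eq]
  have gIt_dist : ∀ (k : ℕ) (a b : X), dist (g^[k] a) (g^[k] b) = dist a b := by
    intro k; induction k with
    | zero => intro a b; simp
    | succ k ih => intro a b; simp only [Function.iterate_succ_apply']; rw [gdist, ih]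
  have F_dist : ∀ (n : ℤ) (a b : X), dist (F n a) (F n b) = dist a b := by
    intro n a b
    by_cases h : 0 ≤ n
    · simp only [hFdef, if_pos h]; exact fIt_dist _ a b
    · simp only [hFdef, if_neg h]; exact gIt_dist _ a b
  have F_succ : ∀ (n : ℤ) (x : X), F (n + 1) x = f (F n x) := by
    intro n x
    rcases le_or_gt 0 n with h | h
    · have h1 : (0:ℤ) ≤ n + 1 := by omega
      have h2 : (n + 1).toNat = n.toNat + 1 := by omega
      simp only [hFdef, if_pos h, if_pos h1, h2, Function.iterate_succ_apply']
    · rcases eq_or_lt_of_le (by omega : n + 1 ≤ 0) with h1 | h1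
      · have hn : n = -1 := by omega
        subst hn
        simp only [hFdef]
        norm_num
        rw [hg]
      · have h2 : ¬ (0:ℤ) ≤ n + 1 := by omega
        have h3 : ¬ (0:ℤ) ≤ n := by omega
        have h4 : (-n).toNat = (-(n+1)).toNat + 1 := by omega
        simp only [hFdef, if_neg h2, if_neg h3, h4]
        rw [Function.iterate_succ_apply', hg]
  have F_comm : ∀ (n : ℤ) (x : X), F n (f x) = f (F n x) := by
    intro n x
    by_cases h : 0 ≤ n
    · simp only [hFdef, if_pos h]
      rw [← Function.iterate_succ_apply f n.toNat x, Function.iterate_succ_apply']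
    · simp only [hFdef, if_neg h]
      cases' hk : (-n).toNat with k
      · simp
      · rw [Function.iterate_succ_apply g k (f x), hgf,
          Function.iterate_succ_apply' g k x]
        rw [hg]
  have F_zero : ∀ x, F 0 x = x := by intro x; simp [hFdef]
  -- the geodesic from p to f p
  have hd : dist p (f p) = τ := by rw [dist_comm]; exact hp
  obtain ⟨σ, hσ, hσ0, hστ⟩ := hX.1 p (f p)
  rw [hd] at hσ hστ
  -- definition of the axis
  set c : ℝ → X := fun t => F ⌊t / τ⌋ (σ (t - ⌊t / τ⌋ * τ)) with hcdef
  have hτne : τ ≠ 0 := ne_of_gt hpos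
  have floor_eq : ∀ (n : ℤ) (t : ℝ), n * τ ≤ t → t < (n + 1) * τ → ⌊t / τ⌋ = n := by
    intro n t h1 h2
    rw [Int.floor_eq_iff]
    constructor
    · rw [le_div_iff₀ hpos]; exact h1
    · rw [div_lt_iff₀ hpos]; push_cast; exact h2
  have c_spec : ∀ (n : ℤ) (t : ℝ), n * τ ≤ t → t ≤ (n + 1) * τ →
      c t = F n (σ (t - n * τ)) := by
    intro n t h1 h2
    rcases lt_or_eq_of_le h2 with h2' | h2'
    · simp only [hcdef]
      rw [floor_eq n t h1 h2']
    · subst h2'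
      have hfl : ⌊((n:ℝ) + 1) * τ / τ⌋ = n + 1 := by
        have hb1 : ((n + 1 : ℤ):ℝ) * τ ≤ ((n:ℝ) + 1) * τ := le_of_eq (by push_cast; ring)
        have hb2 : ((n:ℝ) + 1) * τ < (((n + 1 : ℤ):ℝ) + 1) * τ := by push_cast; nlinarith
        exact floor_eq (n+1) _ hb1 hb2
      simp only [hcdef]
      rw [show ((n:ℝ)+1)*τ = ((n+1 : ℤ):ℝ)*τ by push_cast; ring] at hfl ⊢
      rw [hfl]
      push_cast
      rw [show ((n:ℝ)+1)*τ - ((n:ℝ)+1)*τ = 0 by ring, hσ0]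
      rw [show ((n:ℝ)+1)*τ - (n:ℝ)*τ = τ by ring, hστ]
      rw [show ((n:ℤ)+1) = n + 1 by ring, F_succ, F_comm]
  have c_per : ∀ t, c (t + τ) = f (c t) := by
    intro t
    have hfl : ⌊(t + τ) / τ⌋ = ⌊t / τ⌋ + 1 := by
      rw [show (t + τ)/τ = t/τ + 1 by field_simp]
      exact Int.floor_add_one _
    simp only [hcdef]
    rw [hfl, F_succ]
    congr 2
    push_cast
    ring
  have c_zero : c 0 = p := by
    simp only [hcdef]
    norm_num
    rw [F_zero, hσ0]
  -- displacement along σ is τ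
  have disp : ∀ s, 0 ≤ s → s ≤ τ → dist (f (σ s)) (σ s) = τ := by
    intro s hs0 hsτ
    refine le_antisymm ?_ (hlow _)
    have hfσ : IsGeodesicOn (fun u => f (σ u)) 0 τ := by
      intro x hx y hy; simp only []; rw [hiso.dist_eq]; exact hσ x hx y hy
    have ht : s / τ ∈ Set.Icc (0:ℝ) 1 := ⟨div_nonneg hs0 (le_of_lt hpos), by
      rw [div_le_one hpos]; exact hsτ⟩
    have h0 := conv2 hX (le_of_lt hpos) (le_of_lt hpos) hσ hfσ ht
    rw [show (0:ℝ) + s/τ * (τ - 0) = s by field_simp; ring] at h0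
    have this' : dist (σ s) (f (σ s))
        ≤ (1 - s/τ) * dist (σ 0) (f (σ 0)) + s/τ * dist (σ τ) (f (σ τ)) := h0
    rw [hσ0, hστ, hiso.dist_eq, dist_comm p (f p), hp] at this'
    rw [dist_comm]
    calc dist (σ s) (f (σ s)) ≤ (1 - s/τ) * τ + s/τ * τ := this'
      _ = τ := by ring
  -- geodesic within a window of length τ
  have window : ∀ s t : ℝ, s ≤ t → t ≤ s + τ → dist (c s) (c t) = t - s := by
    intro s t hst hts
    set n := ⌊s / τ⌋ with hn
    have hs1 : (n:ℝ) * τ ≤ s := by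
      have := Int.floor_le (s / τ)
      rw [← le_div_iff₀ hpos]; exact this
    have hs2 : s < ((n:ℝ) + 1) * τ := by
      have := Int.lt_floor_add_one (s / τ)
      rw [← div_lt_iff₀ hpos]; push_cast; exact this
    have cs : c s = F n (σ (s - n * τ)) := c_spec n s hs1 (by push_cast; linarith)
    rcases le_or_gt t (((n:ℝ) + 1) * τ) with hcase | hcase
    · have ct : c t = F n (σ (t - n * τ)) := c_spec n t (by linarith) (by push_cast; linarith)
      rw [cs, ct, F_dist]
      have m1 : s - n * τ ∈ Set.Icc 0 τ := ⟨by linarith, by linarith⟩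
      have m2 : t - n * τ ∈ Set.Icc 0 τ := ⟨by linarith, by linarith⟩
      rw [hσ _ m1 _ m2, abs_of_nonpos (by linarith)]
      ring
    · have ct : c t = F (n + 1) (σ (t - ((n:ℝ) + 1) * τ)) := by
        have h1 : ((n + 1 : ℤ):ℝ) * τ ≤ t := by push_cast; linarith
        have h2 : t ≤ (((n + 1 : ℤ):ℝ) + 1) * τ := by push_cast; linarith
        have := c_spec (n+1) t h1 h2
        push_cast at this
        exact this
      set s' := s - n * τ with hs'
      set t' := t - ((n:ℝ) + 1) * τ with ht'
      have hs'0 : 0 ≤ s' := by simp only [hs']; linarith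
      have hs'τ : s' ≤ τ := by simp only [hs']; linarith
      have ht'0 : 0 ≤ t' := by simp only [ht']; linarith
      have ht's : t' ≤ s' := by simp only [hs', ht']; linarith
      have key : dist (c s) (c t) = dist (σ s') (f (σ t')) := by
        rw [cs, ct]
        rw [show F (n+1) (σ t') = f (F n (σ t')) from F_succ n _, ← F_comm, F_dist]
      have upper : dist (σ s') (f (σ t')) ≤ t - s := by
        calc dist (σ s') (f (σ t')) ≤ dist (σ s') (σ τ) + dist (σ τ) (f (σ t')) :=
              dist_triangle _ _ _
          _ = (τ - s') + t' := by
              rw [hσ _ ⟨hs'0, hs'τ⟩ _ ⟨le_of_lt hpos, le_refl τ⟩,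
                abs_of_nonpos (by linarith)]
              rw [hστ, ← hσ0, hiso.dist_eq, hσ _ ⟨le_refl 0, le_of_lt hpos⟩ _
                ⟨ht'0, le_trans ht's hs'τ⟩, abs_of_nonpos (by linarith)]
              ring
          _ = t - s := by simp only [hs', ht']; ring
      have lower : t - s ≤ dist (σ s') (f (σ t')) := by
        have h1 : dist (σ t') (f (σ t')) ≤ dist (σ t') (σ s') + dist (σ s') (f (σ t')) :=
          dist_triangle _ _ _
        rw [dist_comm (σ t') (f (σ t')), disp t' ht'0 (le_trans ht's hs'τ)] at h1
        rw [hσ _ ⟨ht'0, le_trans ht's hs'τ⟩ _ ⟨hs'0, hs'τ⟩, abs_of_nonpos (by linarith)] at h1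
        have : t - s = τ - (s' - t') := by simp only [hs', ht']; ring
        linarith
      rw [key]
      exact le_antisymm upper lower
  -- global 1-Lipschitz bound
  have upTo : ∀ (k : ℕ) (s t : ℝ), s ≤ t → t - s ≤ k * τ → dist (c s) (c t) ≤ t - s := by
    intro k
    induction k with
    | zero =>
      intro s t hst h
      simp only [Nat.cast_zero, zero_mul] at h
      have : s = t := le_antisymm hst (by linarith)
      subst this; simp
    | succ k ih =>
      intro s t hst h
      rcases le_or_gt (t - s) τ with h1 | h1
      · rw [window s t hst (by linarith)]
      · have step : dist (c s) (c (s + τ)) = τ := by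
          rw [window s (s + τ) (by linarith) (le_refl _)]; ring
        calc dist (c s) (c t) ≤ dist (c s) (c (s + τ)) + dist (c (s + τ)) (c t) :=
              dist_triangle _ _ _
          _ ≤ τ + (t - (s + τ)) := by
              rw [step]
              have := ih (s + τ) t (by linarith) (by push_cast at h ⊢; linarith)
              linarith
          _ = t - s := by ring
  have clip : ∀ s t : ℝ, s ≤ t → dist (c s) (c t) ≤ t - s := by
    intro s t hst
    obtain ⟨k, hk⟩ := exists_nat_ge ((t - s) / τ)
    exact upTo k s t hst (by rw [div_le_iff₀ hpos] at hk; linarith)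
  -- doubling induction
  have dbl : ∀ (k : ℕ) (s t : ℝ), s ≤ t → t - s ≤ τ + k * (τ / 2) →
      dist (c s) (c t) = t - s := by
    intro k
    induction k with
    | zero =>
      intro s t hst h
      simp only [Nat.cast_zero, zero_mul, add_zero] at h
      exact window s t hst (by linarith)
    | succ k ih =>
      intro s t hst h
      rcases le_or_gt (t - s) (τ + k * (τ / 2)) with h1 | h1
      · exact ih s t hst h1
      · have hτts : τ < t - s := by
          have : (0:ℝ) ≤ k * (τ/2) := by positivity
          linarith
        have hgeo : IsGeodesicOn c (t - τ) t := by
          intro x hx y hy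
          rcases le_total x y with hxy | hxy
          · rw [window x y hxy (by linarith [hx.1, hy.2]), abs_of_nonpos (by linarith)]
            ring
          · rw [dist_comm, window y x hxy (by linarith [hy.1, hx.2]),
              abs_of_nonneg (by linarith)]
        have CN := hX.2 c (t - τ) t (by linarith) hgeo (c s) (1/2)
          ⟨by norm_num, by norm_num⟩
        rw [show t - τ + 1/2 * (t - (t - τ)) = t - τ/2 by ring] at CN
        have d1 : dist (c s) (c (t - τ)) = t - τ - s := by
          apply ih s (t - τ) (by linarith)
          push_cast at h
          have hk2 : (τ:ℝ)/2 ≤ τ := by linarith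
          nlinarith [Nat.cast_nonneg (α := ℝ) k]
        have d2 : dist (c s) (c (t - τ/2)) = t - τ/2 - s := by
          apply ih s (t - τ/2) (by linarith)
          push_cast at h
          linarith
        have d3 : dist (c (t - τ)) (c t) = τ := by
          rw [window (t - τ) t (by linarith) (by linarith)]; ring
        rw [d1, d2, d3] at CN
        have hub := clip s t hst
        have hlb : (t - s) ^ 2 ≤ dist (c s) (c t) ^ 2 := by nlinarith [CN]
        have : t - s ≤ dist (c s) (c t) := sqle (by linarith) dist_nonneg hlb
        exact le_antisymm hub this
  refine ⟨c, ?_, c_zero, fun t => (c_per t).symm⟩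
  intro s t
  rcases le_total s t with hst | hst
  · rw [abs_of_nonpos (by linarith)]
    obtain ⟨k, hk⟩ := exists_nat_ge ((t - s) / (τ/2))
    have : t - s ≤ τ + k * (τ/2) := by
      rw [div_le_iff₀ (by linarith : (0:ℝ) < τ/2)] at hk
      linarith
    rw [dbl k s t hst this]; ring
  · rw [abs_of_nonneg (by linarith), dist_comm]
    obtain ⟨k, hk⟩ := exists_nat_ge ((s - t) / (τ/2))
    have : s - t ≤ τ + k * (τ/2) := by
      rw [div_le_iff₀ (by linarith : (0:ℝ) < τ/2)] at hk
      linarith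
    rw [dbl k t s hst this]

end Axis

section Strip

variable {X : Type*} [MetricSpace X]

/-- the distance formula between two parallel axes of `f` -/
private lemma strip (hX : IsCAT0 X) {f : X → X} (hiso : Isometry f) {τ : ℝ} (hpos : 0 < τ)
    {c c' : ℝ → X}
    (hc : ∀ s t, dist (c s) (c t) = |s - t|) (hc' : ∀ s t, dist (c' s) (c' t) = |s - t|)
    (hcf : ∀ t, f (c t) = c (t + τ)) (hc'f : ∀ t, f (c' t) = c' (t + τ)) :
    ∃ δ W : ℝ, 0 ≤ W ∧ ∀ s t, dist (c s) (c' t) ^ 2 = (t - s + δ) ^ 2 + W ^ 2 := by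
  have gc : ∀ a b : ℝ, IsGeodesicOn c a b := fun a b s _ t _ => hc s t
  have gc' : ∀ a b : ℝ, IsGeodesicOn c' a b := fun a b s _ t _ => hc' s t
  -- t-independence
  have gval : ∀ s t : ℝ, dist (c s) (c' t) = dist (c 0) (c' (t - s)) := by
    intro s t
    set r := t - s with hr
    have hconv : ∀ x y u : ℝ, x ≤ y → 0 ≤ u → u ≤ 1 →
        dist (c (x + u * (y - x))) (c' ((x + u * (y - x)) + r))
          ≤ (1 - u) * dist (c x) (c' (x + r)) + u * dist (c y) (c' (y + r)) := by
      intro x y u hxy hu0 hu1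
      have gshift : IsGeodesicOn (fun z => c' (z + r)) x y := by
        intro a _ b _
        show dist (c' (a + r)) (c' (b + r)) = |a - b|
        rw [hc']; congr 1; ring
      have h0 := conv2 hX hxy hxy (gc x y) gshift ⟨hu0, hu1⟩
      exact h0
    have hper : ∀ x : ℝ, dist (c (x + τ)) (c' ((x + τ) + r)) = dist (c x) (c' (x + r)) := by
      intro x
      rw [show (x + τ) + r = (x + r) + τ by ring, ← hcf, ← hc'f, hiso.dist_eq]
    have hcst := convex_periodic_const hpos
      (h := fun x => dist (c x) (c' (x + r))) ?_ hper s 0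
    · rw [show (0:ℝ) + r = t - s by ring, show s + r = t by ring] at hcst
      exact hcst
    · intro x y u hxy hu0 hu1
      exact hconv x y u hxy hu0 hu1
  set H : ℝ → ℝ := fun r => dist (c 0) (c' r) ^ 2 - r ^ 2 with hHdef
  -- midpoint convexity
  have HconvO : ∀ x y : ℝ, x ≤ y → H ((x + y)/2) ≤ (H x + H y)/2 := by
    intro x y hxy
    have CN := hX.2 c' x y hxy (gc' x y) (c 0) (1/2) ⟨by norm_num, by norm_num⟩
    rw [show x + 1/2 * (y - x) = (x+y)/2 by ring] at CN
    have hd : dist (c' x) (c' y) = y - x := by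
      rw [hc', abs_of_nonpos (by linarith)]; ring
    rw [hd] at CN
    simp only [hHdef]
    nlinarith [CN]
  have Hconv : ∀ x y : ℝ, H ((x + y)/2) ≤ (H x + H y)/2 := by
    intro x y
    rcases le_total x y with h | h
    · exact HconvO x y h
    · rw [show (x+y)/2 = (y+x)/2 by ring]
      have := HconvO y x h
      linarith
  -- midpoint concavity
  have Hconc : ∀ x y : ℝ, H x + H y ≤ 2 * H ((x + y)/2) := by
    intro x y
    obtain ⟨σ, hσg, hσ0, hσw⟩ := hX.1 (c ((y - x)/2)) (c' ((x + y)/2))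
    obtain ⟨w, hw⟩ : ∃ w, dist (c ((y - x)/2)) (c' ((x + y)/2)) = w := ⟨_, rfl⟩
    have hw0 : 0 ≤ w := hw ▸ dist_nonneg
    rw [hw] at hσg hσw
    have CN1 := hX.2 σ 0 w hw0 hσg (c 0) (1/2) ⟨by norm_num, by norm_num⟩
    have CN2 := hX.2 σ 0 w hw0 hσg (c' y) (1/2) ⟨by norm_num, by norm_num⟩
    rw [show (0:ℝ) + 1/2 * (w - 0) = w/2 by ring] at CN1 CN2
    rw [hσ0, hσw] at CN1 CN2
    have e1 : dist (c 0) (c ((y - x)/2)) = |(y - x)/2| := by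
      rw [hc, abs_sub_comm]; congr 1; ring
    have e2 : dist (c' y) (c ((y - x)/2)) = dist (c 0) (c' ((x + y)/2)) := by
      rw [dist_comm, gval]; congr 2; ring
    have e3 : dist (c' y) (c' ((x + y)/2)) = |(y - x)/2| := by
      rw [hc']; congr 1; ring
    have e4 : dist (c ((y - x)/2)) (c' ((x + y)/2)) = w := hw
    rw [e1, e4] at CN1
    rw [e2, e3, e4] at CN2
    obtain ⟨M, hM⟩ : ∃ M, dist (c 0) (c' ((x + y)/2)) = M := ⟨_, rfl⟩
    obtain ⟨gx, hgx⟩ : ∃ g, dist (c 0) (c' x) = g := ⟨_, rfl⟩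
    obtain ⟨gy, hgy⟩ : ∃ g, dist (c 0) (c' y) = g := ⟨_, rfl⟩
    obtain ⟨d1, hd1⟩ : ∃ d, dist (c 0) (σ (w/2)) = d := ⟨_, rfl⟩
    obtain ⟨d2, hd2⟩ : ∃ d, dist (c' y) (σ (w/2)) = d := ⟨_, rfl⟩
    rw [hM, hd1] at CN1
    rw [hM, hd2] at CN2
    have hd10 : 0 ≤ d1 := hd1 ▸ dist_nonneg
    have hd20 : 0 ≤ d2 := hd2 ▸ dist_nonneg
    have hwgx : w = gx := by
      rw [← hw, ← hgx, gval]; congr 2; ring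
    have htri : gy ≤ d1 + d2 := by
      rw [← hgy, ← hd1, ← hd2]
      rw [dist_comm (c' y) (σ (w/2))]
      exact dist_triangle _ _ _
    have hq := sq_abs ((y - x)/2)
    have hsq : gy ^ 2 ≤ 2 * ((y - x)/2)^2 + 2 * M^2 - w^2 := by
      nlinarith [CN1, CN2, sq_nonneg (d1 - d2), sq_nonneg (d1 + d2), hd10, hd20, htri,
        (hgy ▸ dist_nonneg : (0:ℝ) ≤ gy)]
    simp only [hHdef]
    rw [hgx, hgy, hM]
    nlinarith [hsq, hwgx]
  -- exact midpoint affinity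
  have Hmid : ∀ x y : ℝ, H x + H y = 2 * H ((x + y)/2) := by
    intro x y
    have := Hconv x y
    have := Hconc x y
    linarith
  -- K is additive and continuous, hence linear
  set K : ℝ → ℝ := fun x => H x - H 0 with hKdef
  have Kadd : ∀ x y : ℝ, K (x + y) = K x + K y := by
    intro x y
    have h1 := Hmid (x + y) 0
    have h2 := Hmid x y
    rw [show ((x+y)+0)/2 = (x+y)/2 by ring] at h1
    simp only [hKdef]
    linear_combination h1 - h2
  have hch : Continuous c' := (Isometry.of_dist_eq (fun a b => by
    rw [hc', Real.dist_eq])).continuous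
  have hKcont : Continuous K := by
    simp only [hKdef, hHdef]
    exact (((continuous_const.dist hch).pow 2).sub (continuous_pow 2)).sub continuous_const
  have Klin : ∀ x : ℝ, K x = K 1 * x := by
    set Khom : ℝ →+ ℝ := AddMonoidHom.mk' K Kadd with hKhom
    have hq : ∀ q : ℚ, K (q:ℝ) = K 1 * (q:ℝ) := by
      intro q
      have := map_ratCast_smul Khom ℝ ℝ q (1:ℝ)
      simp only [smul_eq_mul, mul_one, hKhom, AddMonoidHom.mk'_apply] at this
      rw [this]; ring
    have hfun : K = fun x => K 1 * x := by
      apply Continuous.ext_on (Rat.denseRange_cast (𝕜 := ℝ)) hKcont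
        (continuous_const.mul continuous_id)
      rintro _ ⟨q, rfl⟩
      exact hq q
    intro x
    have h := congrFun hfun x
    simpa using h
  -- conclude
  obtain ⟨α, hα⟩ : ∃ α, K 1 = α := ⟨_, rfl⟩
  have hHval : ∀ r : ℝ, H r = H 0 + α * r := by
    intro r
    have h := Klin r
    rw [hα] at h
    simp only [hKdef] at h
    linarith
  have hβ : 0 ≤ H 0 - (α/2)^2 := by
    have h1 := hHval (-(α/2))
    have h2 : (0:ℝ) ≤ dist (c 0) (c' (-(α/2))) ^ 2 := sq_nonneg _
    simp only [hHdef] at h1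
    nlinarith
  refine ⟨α/2, Real.sqrt (H 0 - (α/2)^2), Real.sqrt_nonneg _, ?_⟩
  intro s t
  have hW2 : Real.sqrt (H 0 - (α/2)^2) ^ 2 = H 0 - (α/2)^2 := Real.sq_sqrt hβ
  have h1 : dist (c s) (c' t) ^ 2 = H (t - s) + (t - s)^2 := by
    rw [gval]; simp only [hHdef]; ring
  rw [h1, hHval (t - s), hW2]
  ring

end Strip

section Euc

private lemma euc {p q r s α β : ℝ} (hp : 0 ≤ p) (hr : 0 ≤ r) (hα : 0 ≤ α) (hβ : 0 ≤ β)
    (h1 : p^2 + q^2 = α^2) (h2 : r^2 + s^2 = β^2) (h3 : (p+r)^2 + (q+s)^2 = (α+β)^2) :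
    (α+β)*p = α*(p+r) ∧ (α+β)*q = α*(q+s) := by
  have hpr : p*r + q*s = α*β := by linear_combination h3/2 - h1/2 - h2/2
  have h4 : (p*s - q*r)^2 = 0 := by
    linear_combination (r^2+s^2)*h1 + α^2*h2 - (p*r+q*s+α*β)*hpr
  have hps0 : p*s - q*r = 0 := by
    exact pow_eq_zero_iff two_ne_zero |>.mp h4
  have h5 : (β*p)^2 = (α*r)^2 := by
    linear_combination (-(p^2))*h2 + r^2*h1 + (p*s+q*r)*hps0
  have hβp : β*p = α*r := by
    have h6 : |β*p| = |α*r| := by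
      rw [← Real.sqrt_sq_eq_abs, ← Real.sqrt_sq_eq_abs, h5]
    rwa [abs_of_nonneg (mul_nonneg hβ hp), abs_of_nonneg (mul_nonneg hα hr)] at h6
  refine ⟨by linear_combination hβp, ?_⟩
  have h7 : (β*q)^2 = (α*s)^2 := by
    linear_combination (-(q^2))*h2 + s^2*h1 - (p*s+q*r)*hps0
  rcases mul_eq_zero.mp (show (β*q - α*s)*(β*q + α*s) = 0 by linear_combination h7) with hc | hc
  · linear_combination hc
  · rcases eq_or_lt_of_le hα with hα0 | hα0
    · have hq2 : q^2 = 0 := by rw [← hα0] at h1; nlinarith [sq_nonneg p]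
      have hq0 : q = 0 := pow_eq_zero_iff two_ne_zero |>.mp hq2
      rw [hq0, ← hα0]; ring
    · rcases eq_or_lt_of_le hβ with hβ0 | hβ0
      · have hs2 : s^2 = 0 := by rw [← hβ0] at h2; nlinarith [sq_nonneg r]
        have hs0 : s = 0 := pow_eq_zero_iff two_ne_zero |>.mp hs2
        rw [hs0, ← hβ0]; ring
      · -- α, β > 0 : degenerate; derive s = 0, q = 0
        have e1 : β*(p*r) + β*(q*s) = α*β^2 := by linear_combination β*hpr
        have e2 : β*(p*r) = α*r^2 := by linear_combination r*hβp
        have e3 : β*(q*s) = -(α*s^2) := by linear_combination s*hc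
        have e4 : α*(r^2) + α*(s^2) = α*β^2 := by linear_combination α*h2
        have e5 : α*(s^2) = 0 := by linarith
        have hs2 : s^2 = 0 := by
          rcases mul_eq_zero.mp e5 with h | h
          · exact absurd h (ne_of_gt hα0)
          · exact h
        have hs0 : s = 0 := pow_eq_zero_iff two_ne_zero |>.mp hs2
        have hq0 : q = 0 := by
          rw [hs0] at hc
          have : β * q = 0 := by linarith
          rcases mul_eq_zero.mp this with h | h
          · exact absurd h (ne_of_gt hβ0)
          · exact h
        rw [hq0, hs0]; ring

private lemma addlem {e W S : ℝ} (hW : 0 ≤ W) (hS : 0 ≤ S)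
    (h : ∀ lam : ℝ, (e + lam*S)^2 + W^2 ≤ (1 + lam^2) * S^2) :
    e = 0 ∧ W ≤ S := by
  have key : e * S = 0 := by
    by_contra hne
    have h2 := h ((S^2 - e^2 - W^2 + 2) / (2 * (e * S)))
    have hx : 2 * (e*S) * ((S^2 - e^2 - W^2 + 2) / (2 * (e * S))) = S^2 - e^2 - W^2 + 2 := by
      field_simp
      exact mul_div_cancel_left₀ _ hne
    nlinarith [h2, hx]
  have h0 := h 0
  rcases mul_eq_zero.mp key with he | hS0
  · refine ⟨he, ?_⟩
    nlinarith [h0, hW, hS]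
  · constructor
    · have he2 : e^2 = 0 := by nlinarith [h0, sq_nonneg W, sq_nonneg e]
      exact pow_eq_zero_iff two_ne_zero |>.mp he2
    · nlinarith [h0, hW, hS, sq_nonneg W]

private lemma flat_alg (a b s t s' t' : ℝ) (hne : a ≠ 0) :
    ((if 0 ≤ b then t' else -t') - b / a * s' - ((if 0 ≤ b then t else -t) - b / a * s)
      + b * (s' / a - s / a)) ^ 2 + (a * (s' / a - s / a)) ^ 2
    = (s - s') ^ 2 + (t - t') ^ 2 := by
  split_ifs with hcase
  · field_simp; ring
  · field_simp; ring

end Euc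

/-- **Geodesic rays in `Min(f)` of a non-rank-one hyperbolic isometry lie in flat
quadrants.** If `f` is a hyperbolic isometry of a proper CAT(0) space that is not
rank-one (every axis bounds a flat half-plane) and `γ` is a geodesic ray contained in
`Min(f)`, then `γ` is contained in an isometrically embedded Euclidean quadrant. -/
theorem ray_in_minSet_in_flat_quadrant {X : Type*} [Nonempty X] [MetricSpace X]
    [ProperSpace X] (hX : IsCAT0 X)
    (f : X → X) (hiso : Isometry f) (hsurj : Function.Surjective f)
    (τ : ℝ) (hτ : τ = ⨅ x : X, dist (f x) x) (hpos : 0 < τ)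
    (hattained : ∃ x : X, dist (f x) x = τ)
    (hnotrankone : ∀ c : ℝ → X, Isometry c → (∀ t : ℝ, f (c t) = c (t + τ)) →
      ∃ φ : ℝ → ℝ → X, (∀ s t s' t' : ℝ, 0 ≤ t → 0 ≤ t' →
        dist (φ s t) (φ s' t') = Real.sqrt ((s - s') ^ 2 + (t - t') ^ 2)) ∧
        ∀ s : ℝ, φ s 0 = c s)
    (γ : ℝ≥0 → X) (hγ : Isometry γ)
    (hγmin : ∀ t : ℝ≥0, dist (f (γ t)) (γ t) = τ) :
    ∃ φ : ℝ → ℝ → X,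
      (∀ s t s' t' : ℝ, 0 ≤ s → 0 ≤ t → 0 ≤ s' → 0 ≤ t' →
        dist (φ s t) (φ s' t') = Real.sqrt ((s - s') ^ 2 + (t - t') ^ 2)) ∧
      ∀ u : ℝ≥0, ∃ s t : ℝ, 0 ≤ s ∧ 0 ≤ t ∧ γ u = φ s t := by
  classical
  have hlow : ∀ z : X, τ ≤ dist (f z) z := by
    intro z; rw [hτ]
    exact ciInf_le ⟨0, by rintro _ ⟨x, rfl⟩; exact dist_nonneg⟩ z
  set pt : ℝ → X := fun u => γ (Real.toNNReal u) with hptdef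
  have hptd : ∀ u v : ℝ, 0 ≤ u → 0 ≤ v → dist (pt u) (pt v) = |u - v| := by
    intro u v hu hv
    simp only [hptdef]
    rw [hγ.dist_eq, NNReal.dist_eq, Real.coe_toNNReal u hu, Real.coe_toNNReal v hv]
  have hptmin : ∀ u : ℝ, dist (f (pt u)) (pt u) = τ := fun u => hγmin _
  have axex : ∀ u : ℝ, ∃ c : ℝ → X,
      (∀ s t, dist (c s) (c t) = |s - t|) ∧ c 0 = pt u ∧ ∀ t, f (c t) = c (t + τ) :=
    fun u => exists_axis hX hiso hsurj hpos hlow (hptmin u)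
  set ax : ℝ → ℝ → X := fun u => (axex u).choose with haxdef
  have axd : ∀ u s t, dist (ax u s) (ax u t) = |s - t| := fun u => (axex u).choose_spec.1
  have ax0 : ∀ u, ax u 0 = pt u := fun u => (axex u).choose_spec.2.1
  have axf : ∀ u t, f (ax u t) = ax u (t + τ) := fun u => (axex u).choose_spec.2.2
  have pairex : ∀ u v : ℝ, ∃ dW : ℝ × ℝ, 0 ≤ dW.2 ∧
      ∀ s t, dist (ax u s) (ax v t) ^ 2 = (t - s + dW.1)^2 + dW.2^2 := by
    intro u v
    obtain ⟨δ, W, h0, h⟩ := strip hX hiso hpos (axd u) (axd v) (axf u) (axf v)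
    exact ⟨(δ, W), h0, h⟩
  set dd : ℝ → ℝ → ℝ := fun u v => (pairex u v).choose.1 with hdd
  set ww : ℝ → ℝ → ℝ := fun u v => (pairex u v).choose.2 with hww
  have ww0 : ∀ u v, 0 ≤ ww u v := fun u v => (pairex u v).choose_spec.1
  have pair : ∀ u v s t, dist (ax u s) (ax v t) ^ 2 = (t - s + dd u v)^2 + (ww u v)^2 :=
    fun u v => (pairex u v).choose_spec.2
  clear_value pt ax dd ww
  have norm2 : ∀ u v : ℝ, 0 ≤ u → 0 ≤ v → (dd u v)^2 + (ww u v)^2 = (v - u)^2 := by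
    intro u v hu hv
    have h := pair u v 0 0
    rw [ax0, ax0, hptd u v hu hv] at h
    nlinarith [h, sq_abs (u - v)]
  -- additivity along ordered triples
  have addL : ∀ u v w : ℝ, 0 ≤ u → u ≤ v → v ≤ w →
      dd u w = dd u v + dd v w ∧ ww u w = ww u v + ww v w := by
    intro u v w hu huv hvw
    have hv0 : 0 ≤ v := le_trans hu huv
    have hw0 : 0 ≤ w := le_trans hv0 hvw
    have hlam : ∀ lam : ℝ,
        ((dd u w - dd u v - dd v w) + lam*(ww u v + ww v w))^2 + (ww u w)^2
          ≤ (1 + lam^2) * (ww u v + ww v w)^2 := by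
      intro lam
      have tri := dist_triangle (ax u 0) (ax v (-(dd u v) + lam * ww u v))
        (ax w (-(dd u v) - dd v w + lam * (ww u v + ww v w)))
      have q1 : dist (ax u 0) (ax v (-(dd u v) + lam * ww u v))
          = Real.sqrt (1 + lam^2) * ww u v := by
        rw [← Real.sqrt_sq (dist_nonneg (x := ax u 0) (y := ax v (-(dd u v) + lam * ww u v))),
          pair]
        rw [show (-(dd u v) + lam * ww u v - 0 + dd u v)^2 + (ww u v)^2
            = (1+lam^2) * (ww u v)^2 by ring]
        rw [Real.sqrt_mul (by positivity), Real.sqrt_sq (ww0 u v)]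
      have q2 : dist (ax v (-(dd u v) + lam * ww u v))
          (ax w (-(dd u v) - dd v w + lam * (ww u v + ww v w)))
          = Real.sqrt (1 + lam^2) * ww v w := by
        rw [← Real.sqrt_sq (dist_nonneg (x := ax v (-(dd u v) + lam * ww u v))
          (y := ax w (-(dd u v) - dd v w + lam * (ww u v + ww v w)))), pair]
        rw [show ((-(dd u v) - dd v w + lam * (ww u v + ww v w))
            - (-(dd u v) + lam * ww u v) + dd v w)^2 + (ww v w)^2
            = (1+lam^2) * (ww v w)^2 by ring]
        rw [Real.sqrt_mul (by positivity), Real.sqrt_sq (ww0 v w)]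
      have q3 : dist (ax u 0) (ax w (-(dd u v) - dd v w + lam * (ww u v + ww v w)))
          = Real.sqrt (((dd u w - dd u v - dd v w) + lam*(ww u v + ww v w))^2 + (ww u w)^2) := by
        rw [← Real.sqrt_sq (dist_nonneg (x := ax u 0)
          (y := ax w (-(dd u v) - dd v w + lam * (ww u v + ww v w)))), pair]
        congr 1
        ring
      rw [q1, q2, q3] at tri
      have tri2 : Real.sqrt (((dd u w - dd u v - dd v w) + lam*(ww u v + ww v w))^2 + (ww u w)^2)
          ≤ Real.sqrt (1 + lam^2) * (ww u v + ww v w) := by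
        rw [mul_add] at tri ⊢
        linarith
      have h5 := pow_le_pow_left₀ (Real.sqrt_nonneg _) tri2 2
      rw [Real.sq_sqrt (by positivity)] at h5
      rw [mul_pow, Real.sq_sqrt (by positivity : (0:ℝ) ≤ 1 + lam^2)] at h5
      exact h5
    obtain ⟨he, hle⟩ := addlem (ww0 u w) (add_nonneg (ww0 u v) (ww0 v w)) hlam
    have hdd' : dd u w = dd u v + dd v w := by linarith
    refine ⟨hdd', ?_⟩
    -- reverse inequality via Cauchy-Schwarz
    have n1 := norm2 u v hu hv0
    have n2 := norm2 v w hv0 hw0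
    have n3 := norm2 u w hu hw0
    have hp0 : 0 ≤ v - u := by linarith
    have hq0 : 0 ≤ w - v := by linarith
    have hpq : (dd u v)*(dd v w) + (ww u v)*(ww v w) ≤ (v-u)*(w-v) := by
      have n12 : ((dd u v)^2 + (ww u v)^2) * ((dd v w)^2 + (ww v w)^2)
          = ((v-u)^2) * ((w-v)^2) := by rw [n1, n2]
      have hsq : ((dd u v)*(dd v w) + (ww u v)*(ww v w))^2 ≤ ((v-u)*(w-v))^2 := by
        nlinarith [n12, sq_nonneg (dd u v * ww v w - dd v w * ww u v)]
      rcases le_or_gt ((dd u v)*(dd v w) + (ww u v)*(ww v w)) 0 with h | h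
      · exact le_trans h (mul_nonneg hp0 hq0)
      · exact sqle (le_of_lt h) (mul_nonneg hp0 hq0) hsq
    have hd2 : (dd u w)^2 = (dd u v + dd v w)^2 := by rw [hdd']
    have hge2 : (ww u v + ww v w)^2 ≤ (ww u w)^2 := by nlinarith [n1, n2, n3, hd2, hpq]
    have hge : ww u v + ww v w ≤ ww u w :=
      sqle (add_nonneg (ww0 u v) (ww0 v w)) (ww0 u w) hge2
    exact le_antisymm hle hge
  -- linearity
  have lin : ∀ u : ℝ, 0 ≤ u → ww 0 u = ww 0 1 * u ∧ dd 0 u = dd 0 1 * u := by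
    intro u hu
    rcases le_total u 1 with h1 | h1
    · obtain ⟨hda, hwa⟩ := addL 0 u 1 (le_refl 0) hu h1
      have n1 : (ww 0 u)^2 + (dd 0 u)^2 = u^2 := by
        have := norm2 0 u (le_refl 0) hu; linarith [this]
      have n2 : (ww u 1)^2 + (dd u 1)^2 = (1-u)^2 := by
        have := norm2 u 1 hu zero_le_one; linarith [this]
      have n3 : (ww 0 u + ww u 1)^2 + (dd 0 u + dd u 1)^2 = (u + (1-u))^2 := by
        have := norm2 0 1 (le_refl 0) zero_le_one
        rw [← hda, ← hwa]
        linarith [this]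
      obtain ⟨c1, c2⟩ := euc (ww0 0 u) (ww0 u 1) hu (by linarith) n1 n2 n3
      constructor
      · rw [hwa]; linarith [c1]
      · rw [hda]; linarith [c2]
    · obtain ⟨hda, hwa⟩ := addL 0 1 u (le_refl 0) zero_le_one h1
      have n1 : (ww 0 1)^2 + (dd 0 1)^2 = (1:ℝ)^2 := by
        have := norm2 0 1 (le_refl 0) zero_le_one; linarith [this]
      have n2 : (ww 1 u)^2 + (dd 1 u)^2 = (u-1)^2 := by
        have := norm2 1 u zero_le_one hu; linarith [this]
      have n3 : (ww 0 1 + ww 1 u)^2 + (dd 0 1 + dd 1 u)^2 = (1 + (u-1))^2 := by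
        have := norm2 0 u (le_refl 0) hu
        rw [← hda, ← hwa]
        linarith [this]
      obtain ⟨c1, c2⟩ := euc (ww0 0 1) (ww0 1 u) zero_le_one (by linarith) n1 n2 n3
      constructor
      · linarith [c1, hwa]
      · linarith [c2, hda]
  have hb2a2 : (dd 0 1)^2 + (ww 0 1)^2 = 1 := by
    have := norm2 0 1 (le_refl 0) zero_le_one; linarith [this]
  have helperOrd : ∀ u v : ℝ, 0 ≤ u → u ≤ v →
      dd u v = dd 0 1 * (v - u) ∧ ww u v = ww 0 1 * (v - u) := by
    intro u v hu huv
    have hv0 : 0 ≤ v := le_trans hu huv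
    obtain ⟨hda, hwa⟩ := addL 0 u v (le_refl 0) hu huv
    obtain ⟨lw1, ld1⟩ := lin u hu
    obtain ⟨lw2, ld2⟩ := lin v hv0
    constructor
    · rw [ld2, ld1] at hda; linarith
    · rw [lw2, lw1] at hwa; linarith
  have sym : ∀ u v : ℝ, dd u v = -(dd v u) ∧ ww u v = ww v u := by
    intro u v
    have ev : ∀ x : ℝ, (x + dd v u)^2 + (ww v u)^2 = (-x + dd u v)^2 + (ww u v)^2 := by
      intro x
      have ha := pair v u 0 x
      have hb := pair u v x 0
      rw [dist_comm] at hb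
      rw [ha] at hb
      linear_combination hb
    have e0 := ev 0
    have e1 := ev 1
    have em := ev (-1)
    have hd : dd u v = -(dd v u) := by linarith [e1, em]
    refine ⟨hd, ?_⟩
    have hw2 : (ww u v)^2 = (ww v u)^2 := by nlinarith [e0, hd]
    exact le_antisymm (sqle (ww0 u v) (ww0 v u) (le_of_eq hw2))
      (sqle (ww0 v u) (ww0 u v) (le_of_eq hw2.symm))
  have helper : ∀ u v : ℝ, 0 ≤ u → 0 ≤ v → ∀ s t,
      dist (ax u s) (ax v t)^2 = (t - s + dd 0 1 * (v-u))^2 + (ww 0 1 * (v-u))^2 := by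
    intro u v hu hv s t
    rcases le_total u v with h | h
    · obtain ⟨h1, h2⟩ := helperOrd u v hu h
      rw [pair, h1, h2]
    · obtain ⟨h1, h2⟩ := helperOrd v u hv h
      obtain ⟨h3, h4⟩ := sym u v
      rw [pair, h3, h4, h1, h2]
      ring
  -- case split on a := ww 0 1
  rcases eq_or_lt_of_le (ww0 0 1) with haz | hapos
  · -- a = 0 : the ray is along an axis; use the half-plane hypothesis
    have hb2 : (dd 0 1)^2 = 1 := by rw [← haz] at hb2a2; nlinarith [hb2a2]
    have hIc : Isometry (ax 0) := Isometry.of_dist_eq (fun x y => by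
      rw [axd, Real.dist_eq])
    obtain ⟨ψ, hψ1, hψ2⟩ := hnotrankone (ax 0) hIc (axf 0)
    refine ⟨fun s t => ψ (dd 0 1 * s) t, ?_, ?_⟩
    · intro s t s' t' hs ht hs' ht'
      have := hψ1 (dd 0 1 * s) t (dd 0 1 * s') t' ht ht'
      rw [this]
      congr 1
      linear_combination (s - s')^2 * hb2
    · intro u
      refine ⟨(u:ℝ), 0, u.coe_nonneg, le_refl 0, ?_⟩
      have h1 : pt (u:ℝ) = ax 0 (dd 0 1 * (u:ℝ)) := by
        have h := helper 0 (u:ℝ) (le_refl 0) u.coe_nonneg (dd 0 1 * (u:ℝ)) 0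
        rw [← haz] at h
        have h3 : dist (ax 0 (dd 0 1 * (u:ℝ))) (ax (u:ℝ) 0)^2 = 0 := by rw [h]; ring
        have h2 : dist (ax 0 (dd 0 1 * (u:ℝ))) (ax (u:ℝ) 0) = 0 :=
          pow_eq_zero_iff two_ne_zero |>.mp h3
        have h4 := dist_eq_zero.mp h2
        rw [← ax0 (u:ℝ), ← h4]
      show γ u = ψ (dd 0 1 * (u:ℝ)) 0
      rw [hψ2 (dd 0 1 * (u:ℝ)), ← h1]
      simp only [hptdef, Real.toNNReal_coe]
  · -- a > 0 : build the quadrant from the family of axes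
    have hne : ww 0 1 ≠ 0 := ne_of_gt hapos
    refine ⟨fun s t => ax (s / ww 0 1)
      ((if 0 ≤ dd 0 1 then t else -t) - (dd 0 1 / ww 0 1) * s), ?_, ?_⟩
    · intro s t s' t' hs ht hs' ht'
      show dist (ax (s / ww 0 1) ((if 0 ≤ dd 0 1 then t else -t) - (dd 0 1 / ww 0 1) * s))
        (ax (s' / ww 0 1) ((if 0 ≤ dd 0 1 then t' else -t') - (dd 0 1 / ww 0 1) * s'))
        = Real.sqrt ((s - s') ^ 2 + (t - t') ^ 2)
      have h := helper (s / ww 0 1) (s' / ww 0 1)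
        (div_nonneg hs (le_of_lt hapos)) (div_nonneg hs' (le_of_lt hapos))
        ((if 0 ≤ dd 0 1 then t else -t) - (dd 0 1 / ww 0 1) * s)
        ((if 0 ≤ dd 0 1 then t' else -t') - (dd 0 1 / ww 0 1) * s')
      rw [← Real.sqrt_sq (dist_nonneg (x := ax (s / ww 0 1)
          ((if 0 ≤ dd 0 1 then t else -t) - (dd 0 1 / ww 0 1) * s))
        (y := ax (s' / ww 0 1)
          ((if 0 ≤ dd 0 1 then t' else -t') - (dd 0 1 / ww 0 1) * s'))), h]
      congr 1
      exact flat_alg (ww 0 1) (dd 0 1) s t s' t' hne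
    · intro u
      refine ⟨ww 0 1 * (u:ℝ), |dd 0 1| * (u:ℝ), by positivity, by positivity, ?_⟩
      show γ u = ax (ww 0 1 * (u:ℝ) / ww 0 1)
        ((if 0 ≤ dd 0 1 then |dd 0 1| * (u:ℝ) else -(|dd 0 1| * (u:ℝ)))
          - (dd 0 1 / ww 0 1) * (ww 0 1 * (u:ℝ)))
      have e1 : ww 0 1 * (u:ℝ) / ww 0 1 = (u:ℝ) := by field_simp
      have e2 : (if 0 ≤ dd 0 1 then |dd 0 1| * (u:ℝ) else -(|dd 0 1| * (u:ℝ)))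
          - (dd 0 1 / ww 0 1) * (ww 0 1 * (u:ℝ)) = 0 := by
        have e3 : (dd 0 1 / ww 0 1) * (ww 0 1 * (u:ℝ)) = dd 0 1 * (u:ℝ) := by
          field_simp
        rw [e3]
        split_ifs with hb
        · rw [abs_of_nonneg hb]; ring
        · rw [abs_of_neg (lt_of_not_ge hb)]; ring
      rw [e1, e2, ax0]
      simp only [hptdef, Real.toNNReal_coe]
end
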